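/- arXiv:2103.07705 — 6 statements merged into one kernel-verified Lean document; each statement's English description precedes it below -/
import Mathlib

section
/- Let G be a unicyclic graph with n ≥ 4 vertices and let x = (x_1, ..., x_n) be its degree sequence in non-increasing order. Then x is majorized by the sequence (n-1, 2, 2, 1, ..., 1) (with n-3 ones), i.e., for every 1 ≤ k ≤ n-1 the partial sum x_1 + ... + x_k is at most the corresponding partial sum of (n-1, 2, 2, 1, ..., 1), and both sequences sum to 2n. -/
open Finset SimpleGraph

/-- A unicyclic graph: connected with as many edges as vertices. -/
def IsUnicyclic {n : ℕ} (G : SimpleGraph (Fin n)) [DecidableRel G.Adj] : Prop :=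
  G.Connected ∧ G.edgeFinset.card = n

/-- The graph `U_n^3`: a triangle on vertices 0,1,2 with n-3 pendant edges attached to 0. -/
def unicyclicStar (n : ℕ) : SimpleGraph (Fin n) :=
  SimpleGraph.fromRel (fun i j => i.val = 0 ∨ (i.val = 1 ∧ j.val = 2))

lemma cycle_two_neighbors {V : Type*} {G : SimpleGraph V} {u : V} (c : G.Walk u u)
    (hc : c.IsCycle) : ∃ a b, a ≠ b ∧ G.Adj u a ∧ G.Adj u b := by
  have hlen := hc.three_le_length
  cases c with
  | nil => exact absurd hc SimpleGraph.Walk.IsCycle.not_of_nil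
  | cons h p =>
    rename_i w
    obtain ⟨hp, he⟩ := (SimpleGraph.Walk.cons_isCycle_iff p h).mp hc
    have hplen : 2 ≤ p.length := by
      simp only [SimpleGraph.Walk.length_cons] at hlen; omega
    have hq : ¬ p.reverse.Nil := by
      rw [SimpleGraph.Walk.not_nil_iff_lt_length, SimpleGraph.Walk.length_reverse]; omega
    obtain ⟨y, hadj, q', hq'⟩ := SimpleGraph.Walk.not_nil_iff.mp hq
    have hmem : s(u, y) ∈ p.edges := by
      have : s(u, y) ∈ p.reverse.edges := by rw [hq']; simp
      rwa [SimpleGraph.Walk.edges_reverse, List.mem_reverse] at this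
    have hyw : y ≠ w := by
      rintro rfl
      exact he hmem
    exact ⟨y, w, hyw, hadj, h⟩

lemma cycle_two_le_degree {n : ℕ} (G : SimpleGraph (Fin n)) [DecidableRel G.Adj]
    {u v : Fin n} (c : G.Walk v v) (hc : c.IsCycle) (hu : u ∈ c.support) :
    2 ≤ G.degree u := by
  obtain ⟨a, b, hab, ha, hb⟩ := cycle_two_neighbors _ (hc.rotate hu)
  have hsub : ({a, b} : Finset (Fin n)) ⊆ G.neighborFinset u := by
    intro z hz
    rw [Finset.mem_insert, Finset.mem_singleton] at hz
    rcases hz with rfl | rfl <;> rw [SimpleGraph.mem_neighborFinset] <;> assumption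
  calc 2 = ({a, b} : Finset (Fin n)).card := (Finset.card_pair hab).symm
    _ ≤ (G.neighborFinset u).card := Finset.card_le_card hsub
    _ = G.degree u := rfl

theorem stmt1 {n : ℕ} (hn : 4 ≤ n) (G : SimpleGraph (Fin n)) [DecidableRel G.Adj]
    (hG : IsUnicyclic G) (σ : Equiv.Perm (Fin n)) (x : ℕ → ℕ)
    (hx : ∀ i : Fin n, x i.val = G.degree (σ i))
    (hdec : ∀ i j : ℕ, i ≤ j → j < n → x j ≤ x i)
    (b : ℕ → ℕ) (hb : ∀ i, b i = if i = 0 then n - 1 else if i ≤ 2 then 2 else 1) :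
    (∀ k, 1 ≤ k → k ≤ n - 1 →
      ∑ i ∈ Finset.range k, x i ≤ ∑ i ∈ Finset.range k, b i) ∧
    ∑ i ∈ Finset.range n, x i = 2 * n ∧ ∑ i ∈ Finset.range n, b i = 2 * n := by
  -- every vertex has degree at least 1
  have hdeg1 : ∀ v : Fin n, 1 ≤ G.degree v := by
    intro v
    refine (G.degree_pos_iff_exists_adj v).mpr ?_
    obtain ⟨w, hw⟩ := Fintype.exists_ne_of_one_lt_card (by simp; omega) v
    obtain ⟨p⟩ := hG.1.preconnected v w
    cases p with
    | nil => exact absurd rfl hw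
    | cons h q => exact ⟨_, h⟩
  -- existence of a cycle
  have hnt : ¬ G.IsAcyclic := by
    intro hac
    have ht : G.IsTree := ⟨hG.1, hac⟩
    have := ht.card_edgeFinset
    rw [hG.2, Fintype.card_fin] at this
    omega
  simp only [SimpleGraph.IsAcyclic] at hnt
  push_neg at hnt
  obtain ⟨v, c, hc⟩ := hnt
  -- x i ≥ 1 for i < n
  have hx1 : ∀ i, i < n → 1 ≤ x i := by
    intro i hi
    rw [show x i = x ((⟨i, hi⟩ : Fin n) : Fin n).val from rfl, hx ⟨i, hi⟩]
    exact hdeg1 _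
  -- x 2 ≥ 2
  have hx2 : 2 ≤ x 2 := by
    have hnodup : c.support.tail.Nodup := hc.support_nodup
    have hlen3 := hc.three_le_length
    have hcard : 3 ≤ c.support.tail.toFinset.card := by
      rw [List.toFinset_card_of_nodup hnodup, List.length_tail,
        SimpleGraph.Walk.length_support]
      omega
    set T := c.support.tail.toFinset.image (fun v => (σ.symm v).val) with hT
    have hinj : Function.Injective (fun v : Fin n => (σ.symm v).val) := by
      intro a b hab
      exact σ.symm.injective (Fin.val_injective hab)
    have hTcard : 3 ≤ T.card := by
      rw [hT, Finset.card_image_of_injective _ hinj]; exact hcard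
    have hjex : ∃ j ∈ T, 2 ≤ j := by
      by_contra hcon
      push_neg at hcon
      have hsub : T ⊆ Finset.range 2 := fun j hj => Finset.mem_range.mpr (hcon j hj)
      have := Finset.card_le_card hsub
      rw [Finset.card_range] at this
      omega
    obtain ⟨j, hjT, hj2⟩ := hjex
    obtain ⟨w, hwL, hwj⟩ := Finset.mem_image.mp hjT
    have hwsup : w ∈ c.support := List.mem_of_mem_tail (List.mem_toFinset.mp hwL)
    have hdw : 2 ≤ G.degree w := cycle_two_le_degree G c hc hwsup
    have hjn : j < n := by rw [← hwj]; exact (σ.symm w).isLt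
    have hxj : x j = G.degree w := by
      rw [← hwj]
      show x (σ.symm w).val = G.degree w
      rw [hx (σ.symm w), Equiv.apply_symm_apply]
    have := hdec 2 j hj2 hjn
    omega
  -- sum of x
  have hsumx : ∑ i ∈ Finset.range n, x i = 2 * n := by
    rw [← Fin.sum_univ_eq_sum_range]
    calc ∑ i : Fin n, x i.val = ∑ i : Fin n, G.degree (σ i) := by
          exact Finset.sum_congr rfl fun i _ => hx i
      _ = ∑ v, G.degree v := Fintype.sum_bijective σ σ.bijective _ _ (fun i => rfl)
      _ = 2 * G.edgeFinset.card := G.sum_degrees_eq_twice_card_edges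
      _ = 2 * n := by rw [hG.2]
  -- partial sums of b
  have hbpart : ∀ k, 3 ≤ k → ∑ i ∈ Finset.range k, b i = n + k := by
    intro k hk
    rw [← Finset.sum_range_add_sum_Ico b hk]
    have h1 : ∑ i ∈ Finset.range 3, b i = n + 3 := by
      simp [Finset.sum_range_succ, hb]
      omega
    have h2 : ∑ i ∈ Finset.Ico 3 k, b i = k - 3 := by
      rw [Finset.sum_congr rfl (fun i hi => ?_), Finset.sum_const, Nat.card_Ico,
        smul_eq_mul, mul_one]
      have h3 := (Finset.mem_Ico.mp hi).1
      rw [hb, if_neg (by omega), if_neg (by omega)]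
    omega
  have hbsum : ∑ i ∈ Finset.range n, b i = 2 * n := by
    rw [hbpart n (by omega)]; ring
  refine ⟨?_, hsumx, hbsum⟩
  intro k hk1 hk2
  have hkn : k ≤ n := by omega
  have hsplit : ∑ i ∈ Finset.range k, x i + ∑ i ∈ Finset.Ico k n, x i = 2 * n := by
    rw [Finset.sum_range_add_sum_Ico x hkn, hsumx]
  have hx1' : ∀ i ∈ Finset.Ico k n, 1 ≤ x i :=
    fun i hi => hx1 i (Finset.mem_Ico.mp hi).2
  rcases Nat.lt_or_ge k 3 with h3 | h3
  · -- k = 1 or k = 2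
    rcases Nat.lt_or_ge k 2 with h1 | h2
    · -- k = 1
      have hk : k = 1 := by omega
      subst hk
      have hb0 : b 0 = n - 1 := by rw [hb]; simp
      have hx0 : x 0 = G.degree (σ ⟨0, by omega⟩) := hx ⟨0, by omega⟩
      have hlt := G.degree_lt_card_verts (σ ⟨0, by omega⟩)
      rw [Fintype.card_fin] at hlt
      rw [Finset.sum_range_one, Finset.sum_range_one, hb0]
      omega
    · -- k = 2
      have hk : k = 2 := by omega
      subst hk
      have h2mem : (2 : ℕ) ∈ Finset.Ico 2 n := Finset.mem_Ico.mpr ⟨le_refl _, by omega⟩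
      have hsplit2 : x 2 + ∑ i ∈ (Finset.Ico 2 n).erase 2, x i = ∑ i ∈ Finset.Ico 2 n, x i :=
        Finset.add_sum_erase _ _ h2mem
      have herase : n - 2 - 1 ≤ ∑ i ∈ (Finset.Ico 2 n).erase 2, x i := by
        calc n - 2 - 1 = ∑ i ∈ (Finset.Ico 2 n).erase 2, 1 := by
              rw [Finset.sum_const, smul_eq_mul, mul_one,
                Finset.card_erase_of_mem h2mem, Nat.card_Ico]
          _ ≤ _ := Finset.sum_le_sum (fun i hi => hx1' i (Finset.mem_of_mem_erase hi))
      have hb2 : ∑ i ∈ Finset.range 2, b i = (n - 1) + 2 := by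
        simp [Finset.sum_range_succ, hb]
      rw [hb2]
      omega
  · -- k ≥ 3
    have htail1 : n - k ≤ ∑ i ∈ Finset.Ico k n, x i := by
      calc n - k = ∑ i ∈ Finset.Ico k n, 1 := by
            rw [Finset.sum_const, Nat.card_Ico, smul_eq_mul, mul_one]
        _ ≤ _ := Finset.sum_le_sum hx1'
    rw [hbpart k h3]
    omega
end

section
/- If G is a unicyclic graph with n ≥ 4 vertices and f : [1,∞) → ℝ is a convex function, then n·f(2) ≤ Σ_{u ∈ V(G)} f(d_u) ≤ f(n-1) + 2f(2) + (n-3)f(1), where d_u denotes the degree of vertex u. -/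
open Finset SimpleGraph

private lemma spread {f : ℝ → ℝ} (hf : ConvexOn ℝ (Set.Ici 1) f)
    {a b a' b' : ℝ} (h1 : 1 ≤ a') (haa : a' ≤ a) (hab : a ≤ b) (hbb : b ≤ b')
    (hsum : a + b = a' + b') : f a + f b ≤ f a' + f b' := by
  rcases eq_or_lt_of_le ((haa.trans hab).trans hbb) with h | h
  · have ha : a = a' := le_antisymm (by linarith) haa
    have hb : b = b' := by linarith
    rw [ha, hb]
  · set c := b' - a' with hc
    have hcpos : 0 < c := by simp only [hc]; linarith
    set t := (a - a') / c with ht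
    have ht0 : 0 ≤ t := div_nonneg (by linarith) hcpos.le
    have ht1 : t ≤ 1 := by rw [ht, div_le_one hcpos]; linarith
    have htc : t * c = a - a' := by rw [ht]; field_simp
    have ha' : a' ∈ Set.Ici (1:ℝ) := Set.mem_Ici.2 h1
    have hb' : b' ∈ Set.Ici (1:ℝ) := Set.mem_Ici.2 (by linarith)
    have hA : (1 - t) • a' + t • b' = a := by
      simp only [smul_eq_mul]; nlinarith [htc]
    have hB : t • a' + (1 - t) • b' = b := by
      simp only [smul_eq_mul]; nlinarith [htc]
    have h₁ := hf.2 ha' hb' (by linarith : (0:ℝ) ≤ 1 - t) ht0 (by ring)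
    have h₂ := hf.2 ha' hb' ht0 (by linarith : (0:ℝ) ≤ 1 - t) (by ring)
    rw [hA] at h₁
    rw [hB] at h₂
    simp only [smul_eq_mul] at h₁ h₂
    linarith

private lemma multiset_bound {f : ℝ → ℝ} (hf : ConvexOn ℝ (Set.Ici 1) f) :
    ∀ m : ℕ, 2 ≤ m → ∀ L : ℕ, 2 ≤ L → ∀ M : Multiset ℕ, Multiset.card M = m →
      (∀ a ∈ M, 1 ≤ a ∧ a ≤ L) → M.sum = L + m →
      (M.map fun (a : ℕ) => f (a : ℝ)).sum ≤ f L + f 2 + ((m : ℝ) - 2) * f 1 := by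
  intro m hm
  induction m, hm using Nat.le_induction with
  | base =>
    intro L hL M hcard hmem hsum
    obtain ⟨p, q, rfl⟩ := Multiset.card_eq_two.1 hcard
    have hp := hmem p (by simp)
    have hq := hmem q (by simp)
    have hsum' : p + q = L + 2 := by simpa using hsum
    have hp2 : 2 ≤ p := by omega
    have hq2 : 2 ≤ q := by omega
    have hpqR : (p : ℝ) + q = 2 + L := by exact_mod_cast (by omega : p + q = 2 + L)
    have key : f p + f q ≤ f 2 + f L := by
      rcases le_total p q with h | h
      · have := spread hf (by norm_num : (1:ℝ) ≤ 2)
          (show (2:ℝ) ≤ p by exact_mod_cast hp2) (show (p:ℝ) ≤ q by exact_mod_cast h)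
          (show (q:ℝ) ≤ L by exact_mod_cast hq.2) (by linarith)
        linarith
      · have := spread hf (by norm_num : (1:ℝ) ≤ 2)
          (show (2:ℝ) ≤ q by exact_mod_cast hq2) (show (q:ℝ) ≤ p by exact_mod_cast h)
          (show (p:ℝ) ≤ L by exact_mod_cast hp.2) (by linarith)
        linarith
    have hmap : (({p, q} : Multiset ℕ).map fun (a : ℕ) => f (a : ℝ)).sum = f p + f q := by
      simp
    rw [hmap]
    norm_num
    linarith
  | succ m hm IH =>
    intro L hL M hcard hmem hsum
    by_cases h1 : (1 : ℕ) ∈ M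
    · obtain ⟨M', rfl⟩ := Multiset.exists_cons_of_mem h1
      have hcard' : Multiset.card M' = m := by
        rw [Multiset.card_cons] at hcard; omega
      have hsum' : M'.sum = L + m := by
        rw [Multiset.sum_cons] at hsum; omega
      have hIH := IH L hL M' hcard' (fun a ha => hmem a (Multiset.mem_cons_of_mem ha)) hsum'
      rw [Multiset.map_cons, Multiset.sum_cons]
      push_cast
      push_cast at hIH
      linarith
    · have h2 : ∀ a ∈ M, 2 ≤ a := by
        intro a ha
        have ha1 := (hmem a ha).1
        by_contra hc
        have : a = 1 := by omega
        exact h1 (this ▸ ha)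
      have hpos : 0 < Multiset.card M := by rw [hcard]; omega
      obtain ⟨p, hpM⟩ := Multiset.card_pos_iff_exists_mem.1 hpos
      obtain ⟨M₁, rfl⟩ := Multiset.exists_cons_of_mem hpM
      have hpos1 : 0 < Multiset.card M₁ := by
        rw [Multiset.card_cons] at hcard; omega
      obtain ⟨q, hqM⟩ := Multiset.card_pos_iff_exists_mem.1 hpos1
      obtain ⟨M₂, rfl⟩ := Multiset.exists_cons_of_mem hqM
      have hp2 : 2 ≤ p := h2 p (by simp)
      have hq2 : 2 ≤ q := h2 q (by simp)
      have hpL : p ≤ L := (hmem p (by simp)).2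
      have hqL : q ≤ L := (hmem q (by simp)).2
      have hcard2 : Multiset.card M₂ = m - 1 := by
        rw [Multiset.card_cons, Multiset.card_cons] at hcard; omega
      have hM₂lb : 2 * Multiset.card M₂ ≤ M₂.sum := by
        have h2' : ∀ x ∈ M₂, 2 ≤ x := fun x hx =>
          h2 x (Multiset.mem_cons_of_mem (Multiset.mem_cons_of_mem hx))
        have := Multiset.card_nsmul_le_sum h2'
        simpa [mul_comm, smul_eq_mul] using this
      have hsum2 : p + q + M₂.sum = L + (m + 1) := by
        rw [Multiset.sum_cons, Multiset.sum_cons] at hsum; omega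
      have hpq : p + q ≤ L + 1 := by omega
      have hp1R : (1:ℝ) ≤ p := by exact_mod_cast (by omega : 1 ≤ p)
      have hq1R : (1:ℝ) ≤ q := by exact_mod_cast (by omega : 1 ≤ q)
      have key : f p + f q ≤ f 1 + f ((p + q - 1 : ℕ) : ℝ) := by
        have hc : ((p + q - 1 : ℕ) : ℝ) = (p : ℝ) + q - 1 := by
          push_cast [Nat.cast_sub (by omega : 1 ≤ p + q)]; ring
        rw [hc]
        rcases le_total p q with h | h
        · have := spread hf le_rfl hp1R (show (p:ℝ) ≤ q by exact_mod_cast h)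
            (show (q:ℝ) ≤ (p:ℝ) + q - 1 by linarith)
            (show (p:ℝ) + q = 1 + ((p:ℝ) + q - 1) by ring)
          linarith
        · have := spread hf le_rfl hq1R (show (q:ℝ) ≤ p by exact_mod_cast h)
            (show (p:ℝ) ≤ (p:ℝ) + q - 1 by linarith)
            (show (q:ℝ) + p = 1 + ((p:ℝ) + q - 1) by ring)
          linarith
      have hIH := IH L hL ((p + q - 1) ::ₘ M₂)
        (by rw [Multiset.card_cons, hcard2]; omega)
        (by
          intro a ha
          rcases Multiset.mem_cons.1 ha with rfl | ha
          · constructor <;> omega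
          · exact hmem a (by simp [ha]))
        (by rw [Multiset.sum_cons]; omega)
      rw [Multiset.map_cons, Multiset.sum_cons] at hIH
      rw [Multiset.map_cons, Multiset.map_cons, Multiset.sum_cons, Multiset.sum_cons]
      push_cast at hIH ⊢
      linarith

theorem stmt2 {n : ℕ} (hn : 4 ≤ n) (G : SimpleGraph (Fin n)) [DecidableRel G.Adj]
    (hG : IsUnicyclic G) (f : ℝ → ℝ) (hf : ConvexOn ℝ (Set.Ici 1) f) :
    (n : ℝ) * f 2 ≤ ∑ u : Fin n, f (G.degree u) ∧
      ∑ u : Fin n, f (G.degree u) ≤ f ((n : ℝ) - 1) + 2 * f 2 + ((n : ℝ) - 3) * f 1 := by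
  have hdsum : ∑ u : Fin n, G.degree u = 2 * n := by
    rw [G.sum_degrees_eq_twice_card_edges, hG.2]
  have hpos : ∀ u : Fin n, 1 ≤ G.degree u := by
    intro u
    obtain ⟨v, hv⟩ := Fintype.exists_ne_of_one_lt_card (by simp; omega) u
    obtain ⟨w⟩ := hG.1.preconnected u v
    have hnn : ¬ w.Nil := SimpleGraph.Walk.not_nil_of_ne (Ne.symm hv)
    rw [SimpleGraph.Walk.not_nil_iff] at hnn
    obtain ⟨x, hadj, -, -⟩ := hnn
    exact (G.degree_pos_iff_exists_adj u).2 ⟨x, hadj⟩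
  have hlt : ∀ u : Fin n, G.degree u ≤ n - 1 := by
    intro u
    have := G.degree_lt_card_verts u
    simp only [Fintype.card_fin] at this
    omega
  have hpair : ∀ u v : Fin n, u ≠ v → G.degree u + G.degree v ≤ n + 1 := by
    intro u v huv
    have hcards : #(G.incidenceFinset u) + #(G.incidenceFinset v) =
        #(G.incidenceFinset u ∪ G.incidenceFinset v) +
        #(G.incidenceFinset u ∩ G.incidenceFinset v) :=
      (Finset.card_union_add_card_inter _ _).symm
    have hsub1 : G.incidenceFinset u ∪ G.incidenceFinset v ⊆ G.edgeFinset := by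
      intro e he
      rcases Finset.mem_union.1 he with h | h <;>
        · rw [mem_incidenceFinset] at h
          exact mem_edgeFinset.2 h.1
    have hsub2 : G.incidenceFinset u ∩ G.incidenceFinset v ⊆ {s(u, v)} := by
      intro e he
      rw [Finset.mem_inter, mem_incidenceFinset, mem_incidenceFinset] at he
      have := G.incidenceSet_inter_incidenceSet_subset huv ⟨he.1, he.2⟩
      simpa using this
    have h1 := Finset.card_le_card hsub1
    have h2 := Finset.card_le_card hsub2
    rw [G.card_incidenceFinset_eq_degree, G.card_incidenceFinset_eq_degree] at hcards
    rw [hG.2] at h1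
    simp at h2
    omega
  constructor
  · -- lower bound: Jensen
    have hj := hf.map_sum_le (t := (univ : Finset (Fin n)))
      (w := fun _ => (n : ℝ)⁻¹) (p := fun u => (G.degree u : ℝ))
      (fun i _ => by positivity)
      (by
        simp only [Finset.sum_const, Finset.card_univ, Fintype.card_fin, nsmul_eq_mul]
        field_simp)
      (fun i _ => Set.mem_Ici.2 (by show (1:ℝ) ≤ (G.degree i : ℝ); exact_mod_cast hpos i))
    have hmean : ∑ i : Fin n, (n : ℝ)⁻¹ • (G.degree i : ℝ) = 2 := by
      rw [← Finset.smul_sum]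
      have h2n : (∑ i : Fin n, (G.degree i : ℝ)) = 2 * n := by
        exact_mod_cast congrArg (Nat.cast : ℕ → ℝ) hdsum
      rw [h2n, smul_eq_mul]
      field_simp
    rw [hmean] at hj
    have hn0 : (0:ℝ) < n := by positivity
    calc (n : ℝ) * f 2 ≤ (n : ℝ) * ∑ i : Fin n, (n : ℝ)⁻¹ • f (G.degree i) :=
          mul_le_mul_of_nonneg_left hj hn0.le
      _ = ∑ u : Fin n, f (G.degree u) := by
          simp only [smul_eq_mul, ← Finset.mul_sum]
          rw [← mul_assoc, mul_inv_cancel₀ (ne_of_gt hn0), one_mul]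
  · -- upper bound
    obtain ⟨i0, -, hmax⟩ := Finset.exists_max_image (univ : Finset (Fin n))
      (fun u => G.degree u) ⟨⟨0, by omega⟩, mem_univ _⟩
    set D := G.degree i0 with hD
    have hD2 : 2 ≤ D := by
      by_contra h
      have hle : ∑ u : Fin n, G.degree u ≤ ∑ _u : Fin n, 1 :=
        Finset.sum_le_sum fun u _ => by have := hmax u (mem_univ u); omega
      simp only [Finset.sum_const, Finset.card_univ, Fintype.card_fin, smul_eq_mul, mul_one]
        at hle
      omega
    have hDn : D ≤ n - 1 := hlt i0
    set L := n + 1 - D with hL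
    have hL2 : 2 ≤ L := by omega
    have hLn : L ≤ n - 1 := by omega
    have hrest_sum : ∑ u ∈ univ.erase i0, G.degree u = L + (n - 1) := by
      have hdsum' := hdsum
      rw [← Finset.sum_erase_add univ _ (Finset.mem_univ i0)] at hdsum'
      omega
    have hrest_card : (univ.erase i0).card = n - 1 := by
      rw [Finset.card_erase_of_mem (mem_univ i0), Finset.card_univ, Fintype.card_fin]
    set Mset : Multiset ℕ := (univ.erase i0).val.map (fun u => G.degree u) with hMset
    have hMcard : Multiset.card Mset = n - 1 := by
      rw [hMset, Multiset.card_map]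
      exact hrest_card
    have hMmem : ∀ a ∈ Mset, 1 ≤ a ∧ a ≤ L := by
      intro a ha
      simp only [hMset, Multiset.mem_map] at ha
      obtain ⟨u, hu, rfl⟩ := ha
      have hune : u ≠ i0 := by
        have := Finset.mem_erase.1 (show u ∈ univ.erase i0 from hu)
        exact this.1
      have := hpair u i0 hune
      exact ⟨hpos u, by omega⟩
    have hMsum : Mset.sum = L + (n - 1) := by
      rw [hMset, ← hrest_sum]
      rfl
    have hkey := multiset_bound hf (n - 1) (by omega) L hL2 Mset hMcard hMmem hMsum
    have hMmap : (Mset.map fun (a : ℕ) => f (a : ℝ)).sum = ∑ u ∈ univ.erase i0, f (G.degree u) := by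
      rw [hMset, Multiset.map_map]
      rfl
    rw [hMmap] at hkey
    have hfinal : f D + f L ≤ f ((n:ℝ) - 1) + f 2 := by
      have hLcast : (L : ℝ) = (n : ℝ) + 1 - D := by
        rw [hL, Nat.cast_sub (by omega : D ≤ n + 1)]
        push_cast
        ring
      have hDcast : (D : ℝ) ≤ (n : ℝ) - 1 := by
        have h' : (D : ℝ) ≤ ((n - 1 : ℕ) : ℝ) := by exact_mod_cast hDn
        rwa [Nat.cast_sub (by omega : 1 ≤ n), Nat.cast_one] at h'
      have hLcast' : (L : ℝ) ≤ (n : ℝ) - 1 := by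
        have h' : (L : ℝ) ≤ ((n - 1 : ℕ) : ℝ) := by exact_mod_cast hLn
        rwa [Nat.cast_sub (by omega : 1 ≤ n), Nat.cast_one] at h'
      rcases le_total D L with h | h
      · have := spread hf (by norm_num : (1:ℝ) ≤ 2)
          (show (2:ℝ) ≤ D by exact_mod_cast hD2) (show (D:ℝ) ≤ L by exact_mod_cast h)
          hLcast' (by rw [hLcast]; ring)
        linarith
      · have := spread hf (by norm_num : (1:ℝ) ≤ 2)
          (show (2:ℝ) ≤ L by exact_mod_cast hL2) (show (L:ℝ) ≤ D by exact_mod_cast h)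
          hDcast (by rw [hLcast]; ring)
        linarith
    have hsplit : ∑ u : Fin n, f (G.degree u) =
        f (G.degree i0) + ∑ u ∈ univ.erase i0, f (G.degree u) :=
      (Finset.add_sum_erase univ (fun u => f (G.degree u)) (mem_univ i0)).symm
    have hn3 : ((n - 1 : ℕ) : ℝ) - 2 = (n : ℝ) - 3 := by
      rw [Nat.cast_sub (by omega : 1 ≤ n)]; ring
    rw [hsplit]
    rw [hn3] at hkey
    linarith
end

section
/- If G is a unicyclic graph with n ≥ 4 vertices and f : [1,∞) → ℝ is a concave function, then f(n-1) + 2f(2) + (n-3)f(1) ≤ Σ_{u ∈ V(G)} f(d_u) ≤ n·f(2). -/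
open Finset SimpleGraph

private lemma slope_pair {f : ℝ → ℝ} (hf : ConcaveOn ℝ (Set.Ici (1:ℝ)) f)
    {a b c d : ℝ} (ha : 1 ≤ a) (hc : 1 ≤ c) (hab : a < b) (hcd : c < d)
    (hac : a ≤ c) (hbd : b ≤ d) :
    (f d - f c) / (d - c) ≤ (f b - f a) / (b - a) := by
  have hg : ConvexOn ℝ (Set.Ici (1:ℝ)) (-f) := hf.neg
  have hb1 : (1:ℝ) ≤ b := le_trans ha hab.le
  have hd1 : (1:ℝ) ≤ d := le_trans hc hcd.le
  have h1 : ((-f) b - (-f) a) / (b - a) ≤ ((-f) d - (-f) a) / (d - a) :=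
    hg.secant_mono (Set.mem_Ici.2 ha) (Set.mem_Ici.2 hb1) (Set.mem_Ici.2 hd1)
      (by linarith) (by linarith) (le_trans hbd le_rfl)
  have h2 : ((-f) a - (-f) d) / (a - d) ≤ ((-f) c - (-f) d) / (c - d) :=
    hg.secant_mono (Set.mem_Ici.2 hd1) (Set.mem_Ici.2 ha) (Set.mem_Ici.2 hc)
      (by linarith) (by linarith) hac
  have he : ((-f) d - (-f) a) / (d - a) = ((-f) a - (-f) d) / (a - d) := by
    rw [← neg_div_neg_eq]; ring_nf
  have he2 : ((-f) c - (-f) d) / (c - d) = ((-f) d - (-f) c) / (d - c) := by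
    rw [← neg_div_neg_eq]; ring_nf
  have := le_trans h1 (he ▸ he2 ▸ h2)
  simp only [Pi.neg_apply] at this
  rw [div_le_div_iff₀ (by linarith) (by linarith)] at this ⊢
  nlinarith

private lemma step_low {f : ℝ → ℝ} (hf : ConcaveOn ℝ (Set.Ici (1:ℝ)) f) {N p q : ℝ}
    (hN : 2 < N) (hp1 : 1 ≤ p) (hp2 : p ≤ 2) (hpq : p ≤ q) (hqN : q ≤ N) :
    f p + (f N - f 2) / (N - 2) * (q - p) ≤ f q := by
  rcases eq_or_lt_of_le hpq with rfl | h
  · simp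
  · have hs := slope_pair hf hp1 (by norm_num) h hN hp2 hqN
    rw [div_le_div_iff₀ (by linarith) (by linarith)] at hs
    have h2 : (f N - f 2) / (N - 2) * (q - p) ≤ f q - f p := by
      rw [div_mul_eq_mul_div, div_le_iff₀ (by linarith)]
      nlinarith
    linarith

private lemma step_top {f : ℝ → ℝ} (hf : ConcaveOn ℝ (Set.Ici (1:ℝ)) f) {N q : ℝ}
    (hN : 2 < N) (h2 : 2 ≤ q) (hqN : q ≤ N) :
    f N + (f N - f 2) / (N - 2) * (q - N) ≤ f q := by
  rcases eq_or_lt_of_le hqN with rfl | h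
  · simp
  · have hs := slope_pair hf (by norm_num) (by linarith) hN h h2 le_rfl
    rw [div_le_div_iff₀ (by linarith) (by linarith)] at hs
    have h3 : (f N - f 2) / (N - 2) * (q - N) ≤ f q - f N := by
      rw [div_mul_eq_mul_div, div_le_iff₀ (by linarith)]
      nlinarith
    linarith

private lemma step_up {f : ℝ → ℝ} (hf : ConcaveOn ℝ (Set.Ici (1:ℝ)) f) {q : ℝ}
    (hq : 2 ≤ q) : f q ≤ f 2 + (f 2 - f 1) * (q - 2) := by
  rcases eq_or_lt_of_le hq with rfl | h
  · simp
  · have hs := slope_pair hf (le_refl (1:ℝ)) (by norm_num) one_lt_two h (by norm_num) hq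
    rw [div_le_div_iff₀ (by linarith) (by norm_num)] at hs
    nlinarith

private lemma degree_pair {n : ℕ} (G : SimpleGraph (Fin n)) [DecidableRel G.Adj]
    {u v : Fin n} (huv : u ≠ v) :
    G.degree u + G.degree v ≤ G.edgeFinset.card + 1 := by
  classical
  rw [← G.card_incidenceFinset_eq_degree u, ← G.card_incidenceFinset_eq_degree v]
  have hsub : G.incidenceFinset u ∪ G.incidenceFinset v ⊆ G.edgeFinset := by
    intro e he
    rcases mem_union.1 he with h | h <;>
    · rw [mem_incidenceFinset] at h
      exact mem_edgeFinset.2 h.1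
  have hint : G.incidenceFinset u ∩ G.incidenceFinset v ⊆ {s(u,v)} := by
    intro e he
    have h1 := (G.mem_incidenceFinset (v := u) e).1 (mem_inter.1 he).1
    have h2 := (G.mem_incidenceFinset (v := v) e).1 (mem_inter.1 he).2
    have := G.incidenceSet_inter_incidenceSet_subset huv ⟨h1, h2⟩
    simpa using this
  calc (G.incidenceFinset u).card + (G.incidenceFinset v).card
      = (G.incidenceFinset u ∪ G.incidenceFinset v).card
        + (G.incidenceFinset u ∩ G.incidenceFinset v).card :=
        (Finset.card_union_add_card_inter _ _).symm
    _ ≤ G.edgeFinset.card + 1 := by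
        exact Nat.add_le_add (Finset.card_le_card hsub)
          (le_trans (Finset.card_le_card hint) (by simp))

private lemma three_big {n : ℕ} (hn : 4 ≤ n) (G : SimpleGraph (Fin n)) [DecidableRel G.Adj]
    (hcard : G.edgeFinset.card = n) :
    3 ≤ (univ.filter fun u => 2 ≤ G.degree u).card := by
  classical
  by_contra h
  push_neg at h
  set S := univ.filter fun u => 2 ≤ G.degree u with hS
  have hsum : ∑ u, G.degree u = 2 * n := by
    rw [G.sum_degrees_eq_twice_card_edges, hcard]
  have hsplit : ∑ u ∈ S, G.degree u + ∑ u ∈ Sᶜ, G.degree u = 2 * n := by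
    rw [Finset.sum_add_sum_compl, hsum]
  have hcomp : ∑ u ∈ Sᶜ, G.degree u ≤ Sᶜ.card := by
    have : ∑ u ∈ Sᶜ, G.degree u ≤ ∑ u ∈ Sᶜ, 1 := by
      apply Finset.sum_le_sum
      intro u hu
      have : u ∉ S := Finset.mem_compl.1 hu
      simp only [hS, Finset.mem_filter, Finset.mem_univ, true_and, not_le] at this
      omega
    simpa using this
  have hccard : Sᶜ.card = n - S.card := by
    rw [Finset.card_compl, Fintype.card_fin]
  have hS2 : S.card ≤ 2 := by omega
  interval_cases h2 : S.card
  · have h1 : ∑ u ∈ S, G.degree u = 0 := by rw [Finset.card_eq_zero.1 h2]; simp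
    omega
  · obtain ⟨u, hu⟩ := Finset.card_eq_one.1 h2
    have h1 : ∑ u ∈ S, G.degree u ≤ n - 1 := by
      rw [hu, Finset.sum_singleton]
      have := G.degree_lt_card_verts u
      rw [Fintype.card_fin] at this
      omega
    omega
  · obtain ⟨u, v, huv, huvS⟩ := Finset.card_eq_two.1 h2
    have h1 : ∑ u ∈ S, G.degree u ≤ n + 1 := by
      rw [huvS, Finset.sum_insert (by simp [huv]), Finset.sum_singleton]
      have := degree_pair G huv
      omega
    omega

private lemma sum_ite3 {n : ℕ} (hn : 4 ≤ n) {w a b : Fin n} (haw : a ≠ w) (hbw : b ≠ w)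
    (hab : a ≠ b) (X Y Z W : ℝ) :
    ∑ u : Fin n, (if u = w then X else if u = a then Y else if u = b then Z else W)
      = X + Y + Z + ((n:ℝ) - 3) * W := by
  classical
  rw [← Finset.sum_erase_add _ _ (Finset.mem_univ w)]
  have haw' : a ∈ univ.erase w := Finset.mem_erase.2 ⟨haw, Finset.mem_univ a⟩
  rw [← Finset.sum_erase_add _ _ haw']
  have hbw' : b ∈ (univ.erase w).erase a :=
    Finset.mem_erase.2 ⟨hab.symm, Finset.mem_erase.2 ⟨hbw, Finset.mem_univ b⟩⟩
  rw [← Finset.sum_erase_add _ _ hbw']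
  have hrw : ∀ u ∈ (((univ : Finset (Fin n)).erase w).erase a).erase b,
      (if u = w then X else if u = a then Y else if u = b then Z else W) = W := by
    intro u hu
    simp only [Finset.mem_erase] at hu
    rw [if_neg hu.2.2.1, if_neg hu.2.1, if_neg hu.1]
  rw [Finset.sum_congr rfl hrw, Finset.sum_const]
  have hcard : ((((univ : Finset (Fin n)).erase w).erase a).erase b).card = n - 3 := by
    rw [Finset.card_erase_of_mem hbw', Finset.card_erase_of_mem haw',
      Finset.card_erase_of_mem (Finset.mem_univ w), Finset.card_univ, Fintype.card_fin]
    omega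
  rw [hcard]
  have : ((n - 3 : ℕ) : ℝ) = (n : ℝ) - 3 := by
    have : (3:ℕ) ≤ n := by omega
    push_cast [Nat.cast_sub this]
    ring
  have e1 : (if b = w then X else if b = a then Y else if b = b then Z else W) = Z := by
    rw [if_neg hbw, if_neg (fun h => hab h.symm), if_pos rfl]
  have e2 : (if a = w then X else if a = a then Y else if a = b then Z else W) = Y := by
    rw [if_neg haw, if_pos rfl]
  have e3 : (if w = w then X else if w = a then Y else if w = b then Z else W) = X :=
    if_pos rfl
  rw [e1, e2, e3, nsmul_eq_mul, this]
  ring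

theorem stmt3 {n : ℕ} (hn : 4 ≤ n) (G : SimpleGraph (Fin n)) [DecidableRel G.Adj]
    (hG : IsUnicyclic G) (f : ℝ → ℝ) (hf : ConcaveOn ℝ (Set.Ici 1) f) :
    f ((n : ℝ) - 1) + 2 * f 2 + ((n : ℝ) - 3) * f 1 ≤ ∑ u : Fin n, f (G.degree u) ∧
      ∑ u : Fin n, f (G.degree u) ≤ (n : ℝ) * f 2 := by
  classical
  obtain ⟨hconn, hcard⟩ := hG
  have hn4 : (4:ℝ) ≤ (n:ℝ) := by exact_mod_cast hn
  have hsumd : ∑ u : Fin n, (G.degree u : ℝ) = 2 * (n:ℝ) := by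
    have : ∑ u : Fin n, G.degree u = 2 * n := by
      rw [G.sum_degrees_eq_twice_card_edges, hcard]
    exact_mod_cast congrArg (Nat.cast : ℕ → ℝ) this
  have hubn : ∀ u, G.degree u + 1 ≤ n := by
    intro u
    have := G.degree_lt_card_verts u
    rw [Fintype.card_fin] at this
    omega
  have hub : ∀ u, (G.degree u : ℝ) ≤ (n:ℝ) - 1 := by
    intro u
    have : ((G.degree u : ℝ)) + 1 ≤ (n:ℝ) := by exact_mod_cast hubn u
    linarith
  have hlb : ∀ u, 1 ≤ G.degree u := by
    intro u
    obtain ⟨v, hv⟩ := Fintype.exists_ne_of_one_lt_card (by rw [Fintype.card_fin]; omega) u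
    obtain ⟨p⟩ := hconn.preconnected u v
    have hnil : ¬ p.Nil := SimpleGraph.Walk.not_nil_of_ne (Ne.symm hv)
    have hadj : G.Adj u (p.getVert 1) := SimpleGraph.Walk.adj_snd hnil
    have := G.degree_pos_iff_exists_adj u |>.2 ⟨p.getVert 1, hadj⟩
    omega
  -- max degree vertex
  obtain ⟨w, -, hw⟩ := Finset.exists_max_image (univ : Finset (Fin n))
    (fun u => G.degree u) ⟨⟨0, by omega⟩, Finset.mem_univ _⟩
  have h3 := three_big hn G hcard
  set S := univ.filter fun u => 2 ≤ G.degree u with hS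
  have h2' : 2 ≤ (S.erase w).card := by
    have := Finset.pred_card_le_card_erase (s := S) (a := w)
    omega
  obtain ⟨a, haS, b, hbS, hab⟩ := (Finset.one_lt_card (s := S.erase w)).mp (by omega)
  have haw : a ≠ w := (Finset.mem_erase.1 haS).1
  have hbw : b ≠ w := (Finset.mem_erase.1 hbS).1
  have ha2 : 2 ≤ G.degree a :=
    (Finset.mem_filter.1 (Finset.mem_erase.1 haS).2).2
  have hb2 : 2 ≤ G.degree b :=
    (Finset.mem_filter.1 (Finset.mem_erase.1 hbS).2).2
  have hw2 : 2 ≤ G.degree w := le_trans ha2 (hw a (Finset.mem_univ a))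
  set N : ℝ := (n:ℝ) - 1 with hNdef
  have hN : 2 < N := by rw [hNdef]; linarith
  set σ : ℝ := (f N - f 2) / (N - 2) with hσ
  set t : Fin n → ℝ := fun u =>
    if u = w then N else if u = a then 2 else if u = b then 2 else 1 with ht
  have hkey : ∀ u : Fin n, f (t u) + σ * ((G.degree u : ℝ) - t u) ≤ f (G.degree u) := by
    intro u
    have hu1 : (1:ℝ) ≤ (G.degree u : ℝ) := by exact_mod_cast hlb u
    have huN : (G.degree u : ℝ) ≤ N := hub u
    by_cases h1 : u = w
    · subst h1
      have h2u : (2:ℝ) ≤ (G.degree u : ℝ) := by exact_mod_cast hw2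
      have := step_top hf hN h2u huN
      simp only [ht, if_pos rfl]
      rw [hσ]
      linarith
    · by_cases h2 : u = a
      · subst h2
        have h2u : (2:ℝ) ≤ (G.degree u : ℝ) := by exact_mod_cast ha2
        have := step_low hf hN (p := 2) (by norm_num) le_rfl h2u huN
        simp only [ht, h1, if_false, eq_self_iff_true, if_true]
        rw [hσ]
        linarith
      · by_cases h3' : u = b
        · subst h3'
          have h2u : (2:ℝ) ≤ (G.degree u : ℝ) := by exact_mod_cast hb2
          have := step_low hf hN (p := 2) (by norm_num) le_rfl h2u huN
          simp only [ht, h1, h2, if_false, eq_self_iff_true, if_true]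
          rw [hσ]
          linarith
        · have := step_low hf hN (p := 1) le_rfl (by norm_num) hu1 huN
          simp only [ht, h1, h2, h3', if_false]
          rw [hσ]
          linarith
  have hsum1 : ∑ u, (f (t u) + σ * ((G.degree u : ℝ) - t u)) ≤ ∑ u, f (G.degree u) :=
    Finset.sum_le_sum fun u _ => hkey u
  have hft : ∑ u, f (t u) = f N + f 2 + f 2 + ((n:ℝ) - 3) * f 1 := by
    have : ∀ u, f (t u) =
        if u = w then f N else if u = a then f 2 else if u = b then f 2 else f 1 := by
      intro u
      simp only [ht, apply_ite f]
    rw [Finset.sum_congr rfl fun u _ => this u]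
    exact sum_ite3 hn haw hbw hab (f N) (f 2) (f 2) (f 1)
  have htt : ∑ u, t u = N + 2 + 2 + ((n:ℝ) - 3) * 1 := by
    rw [ht]
    exact sum_ite3 hn haw hbw hab N 2 2 1
  have hexp : ∑ u, (f (t u) + σ * ((G.degree u : ℝ) - t u))
      = ∑ u, f (t u) + σ * (∑ u, (G.degree u : ℝ) - ∑ u, t u) := by
    rw [Finset.sum_add_distrib, ← Finset.mul_sum, Finset.sum_sub_distrib]
  constructor
  · have hz : ∑ u, (G.degree u : ℝ) - ∑ u, t u = 0 := by
      rw [hsumd, htt, hNdef]; ring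
    rw [hexp, hz, mul_zero, add_zero, hft] at hsum1
    rw [hNdef] at hsum1
    linarith
  · -- upper bound
    have hkey2 : ∀ u : Fin n, f (G.degree u) ≤ f 2 + (f 2 - f 1) * ((G.degree u : ℝ) - 2) := by
      intro u
      rcases Nat.lt_or_ge (G.degree u) 2 with h | h
      · have h1 : G.degree u = 1 := by have := hlb u; omega
        rw [h1]
        norm_num
      · have h2u : (2:ℝ) ≤ (G.degree u : ℝ) := by exact_mod_cast h
        exact step_up hf h2u
    have hsum2 : ∑ u, f (G.degree u) ≤ ∑ u, (f 2 + (f 2 - f 1) * ((G.degree u : ℝ) - 2)) :=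
      Finset.sum_le_sum fun u _ => hkey2 u
    have hcomp : ∑ u : Fin n, (f 2 + (f 2 - f 1) * ((G.degree u : ℝ) - 2)) = (n:ℝ) * f 2 := by
      rw [Finset.sum_add_distrib, ← Finset.mul_sum, Finset.sum_sub_distrib, hsumd,
        Finset.sum_const, Finset.sum_const, Finset.card_univ, Fintype.card_fin]
      simp only [nsmul_eq_mul]
      ring
    rw [hcomp] at hsum2
    exact hsum2
end

section
/- If G is a unicyclic graph with n ≥ 4 vertices and f : [1,∞) → (0,∞) is a function such that log f is convex, then f(2)^n ≤ Π_{u ∈ V(G)} f(d_u) ≤ f(n-1)·f(2)^2·f(1)^{n-3}. -/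
open Finset SimpleGraph

/-- Counting edges: every edge is incident to a vertex of degree ≤ 1 outside `D`,
or lies in the exceptional set `E₀`. -/
lemma edge_bound {n : ℕ} (G : SimpleGraph (Fin n)) [DecidableRel G.Adj]
    (D : Finset (Fin n)) (hD : ∀ u, u ∉ D → G.degree u ≤ 1)
    (E₀ : Finset (Sym2 (Fin n))) (hE₀ : ∀ e ∈ G.edgeFinset, (∀ x ∈ e, x ∈ D) → e ∈ E₀) :
    G.edgeFinset.card ≤ (Finset.univ \ D).card + E₀.card := by
  classical
  have hsub : G.edgeFinset ⊆ (Finset.univ \ D).biUnion (fun w => G.incidenceFinset w) ∪ E₀ := by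
    intro e he
    by_cases hall : ∀ x ∈ e, x ∈ D
    · exact Finset.mem_union_right _ (hE₀ e he hall)
    · push_neg at hall
      obtain ⟨x, hxe, hxD⟩ := hall
      refine Finset.mem_union_left _ (Finset.mem_biUnion.2 ⟨x, by simp [hxD], ?_⟩)
      rw [SimpleGraph.mem_incidenceFinset]
      exact ⟨SimpleGraph.mem_edgeFinset.mp he, hxe⟩
  calc G.edgeFinset.card ≤ ((Finset.univ \ D).biUnion (fun w => G.incidenceFinset w) ∪ E₀).card :=
        Finset.card_le_card hsub
    _ ≤ ((Finset.univ \ D).biUnion (fun w => G.incidenceFinset w)).card + E₀.card :=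
        Finset.card_union_le _ _
    _ ≤ (∑ w ∈ Finset.univ \ D, (G.incidenceFinset w).card) + E₀.card := by
        gcongr; exact Finset.card_biUnion_le
    _ ≤ (∑ _w ∈ Finset.univ \ D, 1) + E₀.card := by
        gcongr with w hw
        rw [SimpleGraph.card_incidenceFinset_eq_degree]
        exact hD w (Finset.mem_sdiff.mp hw).2
    _ = (Finset.univ \ D).card + E₀.card := by rw [Finset.sum_const, smul_eq_mul, mul_one]

lemma key_lower {n : ℕ} (hn : 1 ≤ n) (g : ℝ → ℝ) (hconv : ConvexOn ℝ (Set.Ici 1) g)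
    (d : Fin n → ℕ) (h1 : ∀ u, 1 ≤ d u) (hs : ∑ u, d u = 2 * n) :
    (n : ℝ) * g 2 ≤ ∑ u : Fin n, g (d u) := by
  have hn0 : (0:ℝ) < n := by exact_mod_cast hn
  have hcast : ∑ u : Fin n, ((d u : ℕ) : ℝ) = 2 * n := by exact_mod_cast hs
  have h := hconv.map_sum_le (t := Finset.univ) (w := fun _ : Fin n => (n:ℝ)⁻¹)
      (p := fun u => ((d u : ℕ) : ℝ))
      (fun i _ => by positivity)
      (by rw [Finset.sum_const, Finset.card_univ, Fintype.card_fin, nsmul_eq_mul]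
          field_simp)
      (fun i _ => by simp only [Set.mem_Ici]; exact_mod_cast h1 i)
  have hps : ∑ i : Fin n, (n:ℝ)⁻¹ • ((d i : ℕ) : ℝ) = 2 := by
    simp only [smul_eq_mul, ← Finset.mul_sum, hcast]
    field_simp
    try ring
  rw [hps] at h
  simp only [smul_eq_mul, ← Finset.mul_sum] at h
  calc (n : ℝ) * g 2 ≤ (n:ℝ) * ((n:ℝ)⁻¹ * ∑ i : Fin n, g (d i)) :=
        mul_le_mul_of_nonneg_left h hn0.le
    _ = ∑ u : Fin n, g (d u) := by field_simp

lemma key_upper {n : ℕ} (hn : 4 ≤ n) (g : ℝ → ℝ) (hconv : ConvexOn ℝ (Set.Ici 1) g)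
    (d : Fin n → ℕ) (h1 : ∀ u, 1 ≤ d u) (h2 : ∀ u, d u < n) (hs : ∑ u, d u = 2 * n)
    (hD : 3 ≤ (Finset.univ.filter fun u => 2 ≤ d u).card) :
    ∑ u : Fin n, g (d u) ≤ g ((n:ℝ) - 1) + 2 * g 2 + ((n:ℝ) - 3) * g 1 := by
  classical
  have hn4 : (4:ℝ) ≤ n := by exact_mod_cast hn
  have hn3 : (0:ℝ) < (n:ℝ) - 3 := by linarith
  have hn2 : (0:ℝ) < (n:ℝ) - 2 := by linarith
  have hmem1 : (1:ℝ) ∈ Set.Ici (1:ℝ) := Set.mem_Ici.mpr le_rfl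
  have hmem2 : (2:ℝ) ∈ Set.Ici (1:ℝ) := Set.mem_Ici.mpr (by norm_num)
  have hmemn : (n:ℝ) - 1 ∈ Set.Ici (1:ℝ) := Set.mem_Ici.mpr (by linarith)
  -- chord inequality on [2, n-1]
  have chord : ∀ x : ℝ, 2 ≤ x → x ≤ (n:ℝ) - 1 →
      ((n:ℝ) - 3) * g x ≤ (((n:ℝ) - 1) - x) * g 2 + (x - 2) * g ((n:ℝ) - 1) := by
    intro x hx2 hxn
    have ha : 0 ≤ (((n:ℝ) - 1) - x) / ((n:ℝ) - 3) := by
      apply div_nonneg <;> linarith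
    have hb : 0 ≤ (x - 2) / ((n:ℝ) - 3) := by
      apply div_nonneg <;> linarith
    have hab : (((n:ℝ) - 1) - x) / ((n:ℝ) - 3) + (x - 2) / ((n:ℝ) - 3) = 1 := by
      field_simp
      try ring
    have h := hconv.2 hmem2 hmemn ha hb hab
    rw [smul_eq_mul, smul_eq_mul] at h
    have hx : (((n:ℝ) - 1) - x) / ((n:ℝ) - 3) * 2 + (x - 2) / ((n:ℝ) - 3) * ((n:ℝ) - 1) = x := by
      field_simp
      try ring
    rw [hx] at h
    calc ((n:ℝ) - 3) * g x
        ≤ ((n:ℝ) - 3) * ((((n:ℝ) - 1) - x) / ((n:ℝ) - 3) * g 2 + (x - 2) / ((n:ℝ) - 3) * g ((n:ℝ) - 1)) :=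
          mul_le_mul_of_nonneg_left h hn3.le
      _ = (((n:ℝ) - 1) - x) * g 2 + (x - 2) * g ((n:ℝ) - 1) := by
          field_simp
          try ring
  -- secant comparison : (n-2) g 2 ≤ (n-3) g 1 + g (n-1)
  have hB : ((n:ℝ) - 2) * g 2 ≤ ((n:ℝ) - 3) * g 1 + g ((n:ℝ) - 1) := by
    have ha : 0 ≤ ((n:ℝ) - 3) / ((n:ℝ) - 2) := by apply div_nonneg <;> linarith
    have hb : 0 ≤ (1:ℝ) / ((n:ℝ) - 2) := by positivity
    have hab : ((n:ℝ) - 3) / ((n:ℝ) - 2) + (1:ℝ) / ((n:ℝ) - 2) = 1 := by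
      field_simp
      try ring
    have h := hconv.2 hmem1 hmemn ha hb hab
    rw [smul_eq_mul, smul_eq_mul] at h
    have hx : ((n:ℝ) - 3) / ((n:ℝ) - 2) * 1 + (1:ℝ) / ((n:ℝ) - 2) * ((n:ℝ) - 1) = 2 := by
      field_simp
      try ring
    rw [hx] at h
    calc ((n:ℝ) - 2) * g 2
        ≤ ((n:ℝ) - 2) * (((n:ℝ) - 3) / ((n:ℝ) - 2) * g 1 + (1:ℝ) / ((n:ℝ) - 2) * g ((n:ℝ) - 1)) :=
          mul_le_mul_of_nonneg_left h hn2.le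
      _ = ((n:ℝ) - 3) * g 1 + g ((n:ℝ) - 1) := by
          field_simp
          try ring
  set D := Finset.univ.filter (fun u => 2 ≤ d u) with hDdef
  set Dc := Finset.univ.filter (fun u => ¬ 2 ≤ d u) with hDcdef
  have hone : ∀ u ∈ Dc, d u = 1 := by
    intro u hu
    rw [hDcdef, Finset.mem_filter] at hu
    have := h1 u
    omega
  have hgone : ∑ u ∈ Dc, g (d u) = (Dc.card : ℝ) * g 1 := by
    rw [Finset.sum_congr rfl (fun u hu => by rw [hone u hu, Nat.cast_one]),
      Finset.sum_const, nsmul_eq_mul]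
  have hsplitg : ∑ u : Fin n, g (d u) = (∑ u ∈ D, g (d u)) + (Dc.card : ℝ) * g 1 := by
    rw [← Finset.sum_filter_add_sum_filter_not Finset.univ (fun u => 2 ≤ d u) (fun u => g (d u))]
    rw [← hgone]
  have hcardsplit : D.card + Dc.card = n := by
    rw [hDdef, hDcdef, Finset.card_filter_add_card_filter_not, Finset.card_univ,
      Fintype.card_fin]
  have hsd : ∑ u : Fin n, ((d u : ℕ) : ℝ) = 2 * n := by exact_mod_cast hs
  have hdcd : ∑ u ∈ Dc, ((d u : ℕ) : ℝ) = (Dc.card : ℝ) := by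
    rw [Finset.sum_congr rfl (fun u hu => by rw [hone u hu, Nat.cast_one]),
      Finset.sum_const, nsmul_eq_mul, mul_one]
  have hsplitd : ∑ u ∈ D, ((d u : ℕ) : ℝ) = 2 * n - (Dc.card : ℝ) := by
    have h := Finset.sum_filter_add_sum_filter_not Finset.univ (fun u => 2 ≤ d u)
      (fun u => ((d u : ℕ) : ℝ))
    rw [← hDdef, ← hDcdef] at h
    rw [hdcd, hsd] at h
    linarith
  set A : ℝ := (Dc.card : ℝ) with hAdef
  have hMA : (D.card : ℝ) = (n : ℝ) - A := by
    rw [hAdef]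
    have : ((D.card : ℝ) + (Dc.card : ℝ)) = (n : ℝ) := by exact_mod_cast hcardsplit
    linarith
  have hA3 : A ≤ (n:ℝ) - 3 := by
    have h3 : (3:ℝ) ≤ (D.card : ℝ) := by exact_mod_cast hD
    linarith
  have hA0 : 0 ≤ A := Nat.cast_nonneg _
  have hchordsum : ((n:ℝ)-3) * ∑ u ∈ D, g (d u) ≤
      (((n:ℝ) - A) * ((n:ℝ)-1) - (2*n - A)) * g 2 + ((2*n - A) - 2*((n:ℝ) - A)) * g ((n:ℝ)-1) := by
    rw [Finset.mul_sum]
    calc ∑ u ∈ D, ((n:ℝ)-3) * g (d u)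
        ≤ ∑ u ∈ D, ((((n:ℝ)-1) - ((d u : ℕ):ℝ)) * g 2 + (((d u : ℕ):ℝ) - 2) * g ((n:ℝ)-1)) := by
          refine Finset.sum_le_sum fun u hu => ?_
          have hu2 : 2 ≤ d u := by
            rw [hDdef, Finset.mem_filter] at hu
            exact hu.2
          have hdn : ((d u : ℕ):ℝ) ≤ (n:ℝ) - 1 := by
            have : ((d u + 1 : ℕ) : ℝ) ≤ (n : ℝ) := by exact_mod_cast h2 u
            push_cast at this
            linarith
          exact chord _ (by exact_mod_cast hu2) hdn
      _ = (∑ u ∈ D, (((n:ℝ)-1) - ((d u : ℕ):ℝ))) * g 2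
            + (∑ u ∈ D, (((d u : ℕ):ℝ) - 2)) * g ((n:ℝ)-1) := by
          rw [Finset.sum_add_distrib, Finset.sum_mul, Finset.sum_mul]
      _ = (((n:ℝ) - A) * ((n:ℝ)-1) - (2*n - A)) * g 2
            + ((2*n - A) - 2*((n:ℝ) - A)) * g ((n:ℝ)-1) := by
          simp only [Finset.sum_sub_distrib, Finset.sum_const, nsmul_eq_mul]
          rw [hsplitd, hMA]
          ring
  have hkey : 0 ≤ (((n:ℝ)-3) - A) * (((((n:ℝ)-3) * g 1 + g ((n:ℝ)-1))) - ((n:ℝ)-2) * g 2) :=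
    mul_nonneg (by linarith) (by linarith)
  have hfinal : ((n:ℝ)-3) * ((∑ u ∈ D, g (d u)) + A * g 1) ≤
      ((n:ℝ)-3) * (g ((n:ℝ)-1) + 2 * g 2 + ((n:ℝ)-3) * g 1) := by
    linarith [hchordsum, hkey]
  rw [hsplitg]
  exact le_of_mul_le_mul_left hfinal hn3

theorem stmt4 {n : ℕ} (hn : 4 ≤ n) (G : SimpleGraph (Fin n)) [DecidableRel G.Adj]
    (hG : IsUnicyclic G) (f : ℝ → ℝ) (hpos : ∀ x : ℝ, 1 ≤ x → 0 < f x)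
    (hconv : ConvexOn ℝ (Set.Ici 1) (fun x => Real.log (f x))) :
    f 2 ^ n ≤ ∏ u : Fin n, f (G.degree u) ∧
      ∏ u : Fin n, f (G.degree u) ≤ f ((n : ℝ) - 1) * f 2 ^ 2 * f 1 ^ (n - 3) := by
  classical
  obtain ⟨hconn, hcard⟩ := hG
  -- every vertex has degree at least one
  have h1 : ∀ u, 1 ≤ G.degree u := by
    intro u
    obtain ⟨v, hv⟩ := Fintype.exists_ne_of_one_lt_card (by simp; omega) u
    obtain ⟨p⟩ := hconn.preconnected u v
    cases p with
    | nil => exact absurd rfl hv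
    | cons h q => exact (G.degree_pos_iff_exists_adj u).mpr ⟨_, h⟩
  have h2 : ∀ u, G.degree u < n := fun u => by
    simpa using G.degree_lt_card_verts u
  have hs : ∑ u, G.degree u = 2 * n := by
    rw [G.sum_degrees_eq_twice_card_edges, hcard]
  -- at least three vertices of degree ≥ 2
  have hD3 : 3 ≤ (Finset.univ.filter fun u => 2 ≤ G.degree u).card := by
    by_contra hlt
    push_neg at hlt
    set D := Finset.univ.filter (fun u => 2 ≤ G.degree u) with hDdef
    have hDle : ∀ u, u ∉ D → G.degree u ≤ 1 := by
      intro u hu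
      rw [hDdef, Finset.mem_filter] at hu
      push_neg at hu
      have := hu (Finset.mem_univ u)
      omega
    have hcompl : (Finset.univ \ D).card = n - D.card := by
      rw [Finset.card_sdiff_of_subset (Finset.subset_univ _), Finset.card_univ, Fintype.card_fin]
    have hDn : D.card ≤ n := by
      calc D.card ≤ Finset.univ.card := Finset.card_le_card (Finset.subset_univ _)
        _ = n := by rw [Finset.card_univ, Fintype.card_fin]
    have h012 : D.card = 0 ∨ D.card = 1 ∨ D.card = 2 := by omega
    rcases h012 with h0 | h1' | h2'
    · -- no vertex of degree ≥ 2 : degree sum too small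
      have hall : ∀ u, G.degree u ≤ 1 := fun u =>
        hDle u (by rw [Finset.card_eq_zero.mp h0]; exact Finset.notMem_empty u)
      have : ∑ u, G.degree u ≤ ∑ _u : Fin n, 1 := Finset.sum_le_sum fun u _ => hall u
      simp only [Finset.sum_const, Finset.card_univ, Fintype.card_fin, smul_eq_mul,
        mul_one] at this
      omega
    · -- one vertex of degree ≥ 2
      obtain ⟨x, hx⟩ := Finset.card_eq_one.mp h1'
      have hE : ∀ e ∈ G.edgeFinset, (∀ z ∈ e, z ∈ D) → e ∈ (∅ : Finset (Sym2 (Fin n))) := by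
        intro e he hall
        induction e with
        | _ u v =>
          have hu := hall u (Sym2.mem_mk_left u v)
          have hv := hall v (Sym2.mem_mk_right u v)
          rw [hx, Finset.mem_singleton] at hu hv
          have hne : u ≠ v := (G.mem_edgeSet.mp (SimpleGraph.mem_edgeFinset.mp he)).ne
          exact absurd (hu.trans hv.symm) hne
      have := edge_bound G D hDle ∅ hE
      rw [hcard, hcompl, Finset.card_empty, h1'] at this
      omega
    · -- two vertices of degree ≥ 2
      obtain ⟨x, y, hxy, hx⟩ := Finset.card_eq_two.mp h2'
      have hE : ∀ e ∈ G.edgeFinset, (∀ z ∈ e, z ∈ D) → e ∈ ({s(x, y)} : Finset (Sym2 (Fin n))) := by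
        intro e he hall
        induction e with
        | _ u v =>
          have hu := hall u (Sym2.mem_mk_left u v)
          have hv := hall v (Sym2.mem_mk_right u v)
          rw [hx, Finset.mem_insert, Finset.mem_singleton] at hu hv
          have hne : u ≠ v := (G.mem_edgeSet.mp (SimpleGraph.mem_edgeFinset.mp he)).ne
          rw [Finset.mem_singleton]
          rcases hu with hu | hu <;> rcases hv with hv | hv
          · exact absurd (hu.trans hv.symm) hne
          · rw [hu, hv]
          · rw [hu, hv, Sym2.eq_swap]
          · exact absurd (hu.trans hv.symm) hne
      have := edge_bound G D hDle {s(x, y)} hE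
      rw [hcard, hcompl, Finset.card_singleton, h2'] at this
      omega
  -- assemble
  have hL := key_lower (by omega) _ hconv (fun u => G.degree u) h1 hs
  have hU := key_upper hn _ hconv (fun u => G.degree u) h1 h2 hs hD3
  have hfd : ∀ u : Fin n, 0 < f (G.degree u) := fun u =>
    hpos _ (by exact_mod_cast h1 u)
  have hprod : 0 < ∏ u : Fin n, f (G.degree u) := Finset.prod_pos fun u _ => hfd u
  have hlog : Real.log (∏ u : Fin n, f (G.degree u))
      = ∑ u : Fin n, Real.log (f (G.degree u)) :=
    Real.log_prod fun u _ => (hfd u).ne'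
  have hf1 : 0 < f 1 := hpos 1 le_rfl
  have hf2 : 0 < f 2 := hpos 2 (by norm_num)
  have hn4 : (4:ℝ) ≤ n := by exact_mod_cast hn
  have hfn : 0 < f ((n:ℝ) - 1) := hpos _ (by linarith)
  constructor
  · rw [← Real.log_le_log_iff (pow_pos hf2 n) hprod, Real.log_pow, hlog]
    exact hL
  · rw [← Real.log_le_log_iff hprod
      (mul_pos (mul_pos hfn (pow_pos hf2 2)) (pow_pos hf1 (n - 3))),
      hlog, Real.log_mul (mul_pos hfn (pow_pos hf2 2)).ne' (pow_pos hf1 (n - 3)).ne',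
      Real.log_mul hfn.ne' (pow_pos hf2 2).ne', Real.log_pow, Real.log_pow]
    have hcast : ((n - 3 : ℕ) : ℝ) = (n : ℝ) - 3 := by
      rw [Nat.cast_sub (by omega)]
      norm_num
    rw [hcast]
    push_cast
    linarith [hU]
end

section
/- If G is a unicyclic graph with n ≥ 4 vertices and f : [1,∞) → (0,∞) is a function such that log f is concave, then f(n-1)·f(2)^2·f(1)^{n-3} ≤ Π_{u ∈ V(G)} f(d_u) ≤ f(2)^n. -/
open Finset SimpleGraph

lemma chord_aux {g : ℝ → ℝ} (hg : ConcaveOn ℝ (Set.Ici 1) g) {x y t : ℝ}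
    (hx : 1 ≤ x) (hxt : x ≤ t) (hty : t ≤ y) (hxy : x < y) :
    ((y - t) * g x + (t - x) * g y) / (y - x) ≤ g t := by
  have hyx : 0 < y - x := by linarith
  have h := hg.2 (Set.mem_Ici.mpr hx) (Set.mem_Ici.mpr (by linarith : (1:ℝ) ≤ y))
      (div_nonneg (by linarith : (0:ℝ) ≤ y - t) hyx.le)
      (div_nonneg (by linarith : (0:ℝ) ≤ t - x) hyx.le)
      (by field_simp; ring)
  have harg : ((y - t)/(y-x)) • x + ((t - x)/(y-x)) • y = t := by
    simp only [smul_eq_mul]; field_simp; ring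
  rw [harg] at h
  have heq : ((y - t) * g x + (t - x) * g y) / (y - x)
      = ((y - t)/(y-x)) * g x + ((t - x)/(y-x)) * g y := by field_simp
  rw [heq]
  simpa [smul_eq_mul] using h

lemma key_ineq {n : ℕ} (hn : 4 ≤ n) (g : ℝ → ℝ)
    (hg : ConcaveOn ℝ (Set.Ici 1) g) (d : Fin n → ℕ)
    (hd1 : ∀ v, 1 ≤ d v) (hdn : ∀ v, d v + 1 ≤ n)
    (hsum : ∑ v, d v = 2 * n)
    (hpair : ∀ v w, v ≠ w → d v + d w ≤ n + 1) :
    g ((n : ℝ) - 1) + 2 * g 2 + ((n : ℝ) - 3) * g 1 ≤ ∑ v, g (d v) := by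
  classical
  set a : ℝ := g 2 - g 1 with ha
  set gb : ℝ → ℝ := g - (fun t : ℝ => a * (t - 1) + g 1) with hgbdef
  have gbt : ∀ t, gb t = g t - (a * (t - 1) + g 1) := fun t => rfl
  have haff : ConvexOn ℝ (Set.Ici 1) (fun t : ℝ => a * (t - 1) + g 1) := by
    refine ⟨convex_Ici 1, ?_⟩
    intro x _ y _ p q hp hq hpq
    simp only [smul_eq_mul]
    apply le_of_eq
    linear_combination (a - g 1) * hpq
  have hgb : ConcaveOn ℝ (Set.Ici 1) gb := hg.sub haff
  have gb1 : gb 1 = 0 := by rw [gbt]; ring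
  have gb2 : gb 2 = 0 := by rw [gbt, ha]; ring
  have hn3 : (3:ℝ) ≤ (n:ℝ) - 1 := by
    have : (4:ℝ) ≤ (n:ℝ) := by exact_mod_cast hn
    linarith
  have hgbn : gb ((n:ℝ) - 1) ≤ 0 := by
    have h := chord_aux hgb (x := 1) (y := (n:ℝ) - 1) (t := 2)
      le_rfl (by norm_num) (by linarith) (by linarith)
    rw [gb1, gb2] at h
    have hpos : (0:ℝ) < (n:ℝ) - 1 - 1 := by linarith
    rw [div_le_iff₀ hpos] at h
    nlinarith
  set K : Finset (Fin n) := univ.filter (fun v => 2 ≤ d v) with hK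
  have hcompl : ∀ v ∈ univ.filter (fun v => ¬ 2 ≤ d v), d v = 1 := by
    intro v hv
    simp only [mem_filter] at hv
    have := hd1 v
    omega
  have hsplitsum : ∑ v ∈ K, d v + ∑ v ∈ univ.filter (fun v => ¬ 2 ≤ d v), d v = 2 * n := by
    rw [Finset.sum_filter_add_sum_filter_not]
    exact hsum
  have hcsum : ∑ v ∈ univ.filter (fun v => ¬ 2 ≤ d v), d v
      = (univ.filter (fun v => ¬ 2 ≤ d v)).card := by
    rw [Finset.card_eq_sum_ones]
    exact Finset.sum_congr rfl hcompl
  have hcards : K.card + (univ.filter (fun v => ¬ 2 ≤ d v)).card = n := by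
    rw [hK, Finset.card_filter_add_card_filter_not]
    simp
  have hcardKn : K.card ≤ n := by omega
  have hKsum : ∑ v ∈ K, d v = n + K.card := by omega
  have hK3 : 3 ≤ K.card := by
    by_contra hlt
    have h012 : K.card = 0 ∨ K.card = 1 ∨ K.card = 2 := by omega
    rcases h012 with h0 | h1 | h2
    · rw [Finset.card_eq_zero.mp (h0)] at hKsum
      simp at hKsum
      omega
    · obtain ⟨v, hv⟩ := Finset.card_eq_one.mp h1
      rw [hv, Finset.sum_singleton, Finset.card_singleton] at hKsum
      have := hdn v
      omega
    · obtain ⟨v, w, hvw, hvweq⟩ := Finset.card_eq_two.mp h2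
      rw [hvweq, Finset.sum_pair hvw, Finset.card_pair hvw] at hKsum
      have := hpair v w hvw
      omega
  have hKsumR : ∑ v ∈ K, ((d v : ℝ)) = (n : ℝ) + K.card := by
    exact_mod_cast congrArg (Nat.cast : ℕ → ℝ) hKsum
  have hchordK : ∀ v ∈ K, ((d v : ℝ) - 2) * gb ((n:ℝ) - 1) / ((n:ℝ) - 3) ≤ gb (d v) := by
    intro v hv
    simp only [hK, mem_filter] at hv
    have h2d : (2:ℝ) ≤ (d v : ℝ) := by exact_mod_cast hv.2
    have hdnR : (d v : ℝ) ≤ (n:ℝ) - 1 := by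
      have h' : ((d v : ℕ) : ℝ) + 1 ≤ (n:ℝ) := by exact_mod_cast hdn v
      linarith
    have h := chord_aux hgb (x := 2) (y := (n:ℝ) - 1) (t := (d v : ℝ))
      (by norm_num) h2d hdnR (by linarith)
    rw [gb2] at h
    have heq2 : ((n:ℝ) - 1 - (d v:ℝ)) * 0 + ((d v:ℝ) - 2) * gb ((n:ℝ)-1)
        = ((d v:ℝ) - 2) * gb ((n:ℝ)-1) := by ring
    rw [heq2] at h
    have hrw : (n:ℝ) - 1 - 2 = (n:ℝ) - 3 := by ring
    rw [hrw] at h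
    exact h
  have hsub2 : ∑ v ∈ K, ((d v:ℝ) - 2) = (n:ℝ) - K.card := by
    rw [Finset.sum_sub_distrib, hKsumR, Finset.sum_const, nsmul_eq_mul]
    ring
  have hKsum2 : ∑ v ∈ K, (((d v : ℝ) - 2) * gb ((n:ℝ) - 1) / ((n:ℝ) - 3))
      = ((n:ℝ) - K.card) * gb ((n:ℝ) - 1) / ((n:ℝ) - 3) := by
    rw [← Finset.sum_div, ← Finset.sum_mul, hsub2]
  have hgbKsum : ((n:ℝ) - K.card) * gb ((n:ℝ) - 1) / ((n:ℝ) - 3) ≤ ∑ v ∈ K, gb (d v) := by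
    rw [← hKsum2]
    exact Finset.sum_le_sum hchordK
  have hkR : (3:ℝ) ≤ (K.card : ℝ) := by exact_mod_cast hK3
  have hkRn : (K.card : ℝ) ≤ (n:ℝ) := by exact_mod_cast hcardKn
  have hn3' : (0:ℝ) < (n:ℝ) - 3 := by linarith
  have hmain : gb ((n:ℝ) - 1) ≤ ∑ v ∈ K, gb (d v) := by
    refine le_trans ?_ hgbKsum
    rw [le_div_iff₀ hn3']
    nlinarith [mul_nonneg (neg_nonneg.mpr hgbn) (by linarith : (0:ℝ) ≤ (K.card:ℝ) - 3)]
  have hsplitgb : ∑ v, gb ((d v : ℝ)) = ∑ v ∈ K, gb ((d v : ℝ)) := by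
    rw [← Finset.sum_filter_add_sum_filter_not univ (fun v => 2 ≤ d v)
      (fun v => gb ((d v : ℝ)))]
    have hz : ∑ v ∈ univ.filter (fun v => ¬ 2 ≤ d v), gb ((d v : ℝ)) = 0 := by
      refine Finset.sum_eq_zero fun v hv => ?_
      rw [hcompl v hv]
      simpa using gb1
    rw [hz, add_zero]
  have hsumR : ∑ v, ((d v : ℝ)) = 2 * (n:ℝ) := by exact_mod_cast hsum
  have hgsum : ∑ v, g ((d v : ℝ)) = ∑ v, gb ((d v : ℝ)) + a * (n:ℝ) + (n:ℝ) * g 1 := by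
    have hterm : ∀ v : Fin n, g ((d v:ℝ)) = gb ((d v:ℝ)) + (a * ((d v:ℝ) - 1) + g 1) :=
      fun v => by rw [gbt]; ring
    rw [Finset.sum_congr rfl (fun v _ => hterm v), Finset.sum_add_distrib,
      Finset.sum_add_distrib, ← Finset.mul_sum, Finset.sum_sub_distrib, hsumR,
      Finset.sum_const, Finset.sum_const, Finset.card_univ, Fintype.card_fin,
      nsmul_eq_mul, nsmul_eq_mul]
    ring
  have htarget : g ((n:ℝ) - 1) + 2 * g 2 + ((n:ℝ) - 3) * g 1
      = gb ((n:ℝ) - 1) + a * (n:ℝ) + (n:ℝ) * g 1 := by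
    rw [gbt, ha]; ring
  rw [htarget, hgsum, hsplitgb]
  linarith

open Finset SimpleGraph

lemma deg_pos' {n : ℕ} (hn : 2 ≤ n) (G : SimpleGraph (Fin n)) [DecidableRel G.Adj]
    (hc : G.Connected) (v : Fin n) : 0 < G.degree v := by
  rw [SimpleGraph.degree_pos_iff_exists_adj]
  obtain ⟨w, _, hw⟩ := Finset.exists_mem_ne
    (by simp [Finset.card_univ]; omega : 1 < (Finset.univ : Finset (Fin n)).card) v
  obtain ⟨p⟩ := hc.preconnected v w
  cases p with
  | nil => exact absurd rfl hw
  | cons h _ => exact ⟨_, h⟩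

lemma deg_pair' {n : ℕ} (G : SimpleGraph (Fin n)) [DecidableRel G.Adj]
    {v w : Fin n} (hvw : v ≠ w) :
    G.degree v + G.degree w ≤ G.edgeFinset.card + 1 := by
  classical
  rw [← SimpleGraph.card_incidenceFinset_eq_degree, ← SimpleGraph.card_incidenceFinset_eq_degree]
  have hsub : G.incidenceFinset v ∪ G.incidenceFinset w ⊆ G.edgeFinset := by
    intro e he
    rcases Finset.mem_union.mp he with h | h <;>
      · rw [SimpleGraph.mem_incidenceFinset] at h
        exact SimpleGraph.mem_edgeFinset.mpr h.1
  have hint : G.incidenceFinset v ∩ G.incidenceFinset w ⊆ {s(v, w)} := by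
    intro e he
    rw [Finset.mem_inter, SimpleGraph.mem_incidenceFinset,
      SimpleGraph.mem_incidenceFinset] at he
    simp only [Finset.mem_singleton]
    exact (Sym2.mem_and_mem_iff hvw).mp ⟨he.1.2, he.2.2⟩
  have h1 := Finset.card_union_add_card_inter (G.incidenceFinset v) (G.incidenceFinset w)
  have h2 := Finset.card_le_card hsub
  have h3 := Finset.card_le_card hint
  simp only [Finset.card_singleton] at h3
  omega


theorem stmt5 {n : ℕ} (hn : 4 ≤ n) (G : SimpleGraph (Fin n)) [DecidableRel G.Adj]
    (hG : IsUnicyclic G) (f : ℝ → ℝ) (hpos : ∀ x : ℝ, 1 ≤ x → 0 < f x)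
    (hconc : ConcaveOn ℝ (Set.Ici 1) (fun x => Real.log (f x))) :
    f ((n : ℝ) - 1) * f 2 ^ 2 * f 1 ^ (n - 3) ≤ ∏ u : Fin n, f (G.degree u) ∧
      ∏ u : Fin n, f (G.degree u) ≤ f 2 ^ n := by
  classical
  set g : ℝ → ℝ := fun x => Real.log (f x) with hg
  set d : Fin n → ℕ := fun v => G.degree v with hd
  have hgdeq : ∀ u : Fin n, (G.degree u : ℕ) = d u := fun u => rfl
  simp only [hgdeq]
  have hnR : (4:ℝ) ≤ (n:ℝ) := by exact_mod_cast hn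
  have hd1 : ∀ v, 1 ≤ d v := fun v => deg_pos' (by omega) G hG.1 v
  have hdn : ∀ v, d v + 1 ≤ n := by
    intro v
    have h := G.degree_lt_card_verts v
    simp only [Fintype.card_fin, hgdeq] at h
    omega
  have hsum : ∑ v, d v = 2 * n := by
    have : ∑ v : Fin n, G.degree v = 2 * n := by
      rw [SimpleGraph.sum_degrees_eq_twice_card_edges, hG.2]
    simpa only [hgdeq] using this
  have hpair : ∀ v w : Fin n, v ≠ w → d v + d w ≤ n + 1 := by
    intro v w hvw
    have := deg_pair' G hvw
    rw [hG.2] at this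
    exact this
  have hd1R : ∀ v, (1:ℝ) ≤ (d v : ℝ) := fun v => by exact_mod_cast hd1 v
  have hprod : ∏ u : Fin n, f ((d u : ℝ)) = Real.exp (∑ u : Fin n, g ((d u : ℝ))) := by
    rw [Real.exp_sum]
    exact Finset.prod_congr rfl fun v _ => (Real.exp_log (hpos _ (hd1R v))).symm
  constructor
  · -- lower bound
    have hkey := key_ineq hn g hconc d hd1 hdn hsum hpair
    have hlhs : f ((n : ℝ) - 1) * f 2 ^ 2 * f 1 ^ (n - 3)
        = Real.exp (g ((n:ℝ) - 1) + 2 * g 2 + ((n:ℝ) - 3) * g 1) := by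
      rw [Real.exp_add, Real.exp_add]
      have e1 : Real.exp (g ((n:ℝ) - 1)) = f ((n:ℝ) - 1) :=
        Real.exp_log (hpos _ (by linarith))
      have e2 : Real.exp (2 * g 2) = f 2 ^ 2 := by
        have : ((2:ℕ):ℝ) * g 2 = 2 * g 2 := by norm_num
        rw [← this, Real.exp_nat_mul, Real.exp_log (hpos 2 (by norm_num))]
      have e3 : Real.exp (((n:ℝ) - 3) * g 1) = f 1 ^ (n - 3) := by
        have hc3 : ((n - 3 : ℕ) : ℝ) = (n:ℝ) - 3 := by
          rw [Nat.cast_sub (by omega)]; norm_num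
        rw [← hc3, Real.exp_nat_mul, Real.exp_log (hpos 1 le_rfl)]
      rw [e1, e2, e3]
    rw [hlhs, hprod]
    exact Real.exp_le_exp.mpr hkey
  · -- upper bound
    have hnpos : (0:ℝ) < (n:ℝ) := by linarith
    have hjen := hconc.le_map_sum (t := univ) (w := fun _ : Fin n => ((n:ℝ))⁻¹)
      (p := fun v => ((d v : ℕ) : ℝ))
      (fun _ _ => by positivity)
      (by
        rw [Finset.sum_const, Finset.card_univ, Fintype.card_fin, nsmul_eq_mul]
        field_simp)
      (fun v _ => Set.mem_Ici.mpr (hd1R v))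
    have harg : ∑ v : Fin n, ((n:ℝ))⁻¹ • ((d v : ℕ) : ℝ) = 2 := by
      simp only [smul_eq_mul]
      rw [← Finset.mul_sum]
      have hs : ∑ v : Fin n, ((d v : ℕ) : ℝ) = 2 * (n:ℝ) := by exact_mod_cast hsum
      rw [hs]
      field_simp
    rw [harg] at hjen
    simp only [smul_eq_mul] at hjen
    rw [← Finset.mul_sum] at hjen
    have hsumle : ∑ v : Fin n, g ((d v : ℝ)) ≤ (n:ℝ) * g 2 := by
      rw [inv_mul_le_iff₀ hnpos] at hjen
      linarith
    have hrhs : f 2 ^ n = Real.exp ((n:ℝ) * g 2) := by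
      rw [Real.exp_nat_mul, Real.exp_log (hpos 2 (by norm_num))]
    rw [hprod, hrhs]
    exact Real.exp_le_exp.mpr hsumle
end

section
/- If G is a unicyclic graph with n ≥ 4 vertices and α ∈ (-∞,0) ∪ (1,∞), then n·2^α ≤ Σ_{u ∈ V(G)} d_u^α ≤ (n-1)^α + 2^{α+1} + n - 3. Moreover, the lower bound is attained if and only if G is the cycle C_n, and the upper bound is attained if and only if G is the graph obtained from C_3 by attaching n-3 pendant edges to one vertex. -/
open Finset SimpleGraph

open Set



lemma sc_rpow {α : ℝ} (hα : α < 0 ∨ 1 < α) :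
    StrictConvexOn ℝ (Set.Ioi 0) fun x : ℝ => x ^ α := by
  rcases hα with hα | hα
  · apply strictConvexOn_of_deriv2_pos (convex_Ioi 0)
    · exact fun x hx => (Real.continuousAt_rpow_const x α (Or.inl (ne_of_gt hx))).continuousWithinAt
    · intro x hx
      rw [interior_Ioi] at hx
      have hev : deriv (fun y : ℝ => y ^ α) =ᶠ[nhds x] fun y => α * y ^ (α - 1) := by
        filter_upwards [Ioi_mem_nhds hx] with y hy
        exact Real.deriv_rpow_const y α
      have h2 : deriv (deriv fun y : ℝ => y ^ α) x = α * ((α - 1) * x ^ (α - 1 - 1)) := by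
        rw [hev.deriv_eq, deriv_const_mul _ (Real.differentiableAt_rpow_const_of_ne _ (ne_of_gt hx)),
          Real.deriv_rpow_const x (α - 1)]
      have : deriv^[2] (fun y : ℝ => y ^ α) x = α * ((α - 1) * x ^ (α - 1 - 1)) := by
        simpa [Function.iterate_succ] using h2
      rw [this]
      have hx2 : (0:ℝ) < x ^ (α - 1 - 1) := Real.rpow_pos_of_pos hx _
      have h3 : (0:ℝ) < α * (α - 1) := mul_pos_of_neg_of_neg hα (by linarith)
      nlinarith [mul_pos h3 hx2]
  · exact (strictConvexOn_rpow hα).subset (Ioi_subset_Ici le_rfl) (convex_Ioi 0)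

lemma tangent_lt {α : ℝ} (hα : α < 0 ∨ 1 < α) {x : ℝ} (hx : 0 < x) (hne : x ≠ 2) :
    (2:ℝ) ^ α + α * 2 ^ (α - 1) * (x - 2) < x ^ α := by
  have hd : HasDerivAt (fun y : ℝ => y ^ α) (α * (2:ℝ) ^ (α - 1)) 2 := by
    simpa using Real.hasDerivAt_rpow_const (p := α) (x := (2:ℝ)) (Or.inl two_ne_zero)
  have h2 : (2:ℝ) ∈ Set.Ioi (0:ℝ) := by norm_num
  rcases lt_or_gt_of_ne hne with h | h
  · have := (sc_rpow hα).slope_lt_of_hasDerivAt (Set.mem_Ioi.mpr hx) h2 h hd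
    rw [slope_def_field] at this
    have hpos : (0:ℝ) < 2 - x := by linarith
    rw [div_lt_iff₀ hpos] at this
    nlinarith
  · have := (sc_rpow hα).lt_slope_of_hasDerivAt h2 (Set.mem_Ioi.mpr hx) h hd
    rw [slope_def_field] at this
    have hpos : (0:ℝ) < x - 2 := by linarith
    rw [lt_div_iff₀ hpos] at this
    nlinarith

lemma tangent_le {α : ℝ} (hα : α < 0 ∨ 1 < α) {x : ℝ} (hx : 0 < x) :
    (2:ℝ) ^ α + α * 2 ^ (α - 1) * (x - 2) ≤ x ^ α := by
  rcases eq_or_ne x 2 with rfl | hne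
  · simp
  · exact (tangent_lt hα hx hne).le

lemma chord_lt {α : ℝ} (hα : α < 0 ∨ 1 < α) {a b x : ℝ} (ha : 0 < a) (hab : a < b)
    (h1 : a < x) (h2 : x < b) :
    x ^ α < a ^ α + (x - a) * ((b ^ α - a ^ α) / (b - a)) := by
  have hba : (0:ℝ) < b - a := by linarith
  have ht : (0:ℝ) < (b - x) / (b - a) := div_pos (by linarith) hba
  have hs : (0:ℝ) < (x - a) / (b - a) := div_pos (by linarith) hba
  have hts : (b - x) / (b - a) + (x - a) / (b - a) = 1 := by field_simp; ring
  have hb : b ∈ Set.Ioi (0:ℝ) := by simp; linarith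
  have := (sc_rpow hα).2 (Set.mem_Ioi.mpr ha) hb (ne_of_lt hab) ht hs hts
  simp only [smul_eq_mul] at this
  have hcomb : (b - x) / (b - a) * a + (x - a) / (b - a) * b = x := by field_simp; ring
  rw [hcomb] at this
  calc x ^ α < (b - x) / (b - a) * a ^ α + (x - a) / (b - a) * b ^ α := this
    _ = a ^ α + (x - a) * ((b ^ α - a ^ α) / (b - a)) := by field_simp; ring

lemma chord_le {α : ℝ} (hα : α < 0 ∨ 1 < α) {a b x : ℝ} (ha : 0 < a) (hab : a < b)
    (h1 : a ≤ x) (h2 : x ≤ b) :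
    x ^ α ≤ a ^ α + (x - a) * ((b ^ α - a ^ α) / (b - a)) := by
  rcases eq_or_lt_of_le h1 with rfl | h1
  · simp
  rcases eq_or_lt_of_le h2 with rfl | h2
  · have : (0:ℝ) < x - a := by linarith
    field_simp
    linarith
  · exact (chord_lt hα ha hab h1 h2).le

lemma slope_lt_slope {α : ℝ} (hα : α < 0 ∨ 1 < α) {M : ℝ} (hM : 3 ≤ M) :
    (M ^ α - 1 ^ α) / (M - 1) < (M ^ α - 2 ^ α) / (M - 2) := by
  have h1M : (1:ℝ) < M := by linarith
  have h2M : (0:ℝ) < M - 2 := by linarith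
  have h1M' : (0:ℝ) < M - 1 := by linarith
  have h := chord_lt hα one_pos h1M one_lt_two (by linarith)
  set c1 := (M ^ α - 1 ^ α) / (M - 1) with hc1def
  have hc1 : c1 * (M - 1) = M ^ α - 1 ^ α := div_mul_cancel₀ _ (ne_of_gt h1M')
  rw [div_lt_div_iff₀ h1M' h2M]
  nlinarith [h, hc1, mul_lt_mul_of_pos_right h h1M']

lemma lower_real {α : ℝ} (hα : α < 0 ∨ 1 < α) {n : ℕ} (d : Fin n → ℕ)
    (hd1 : ∀ u, 1 ≤ d u) (hsum : ∑ u, d u = 2 * n) :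
    ((n:ℝ) * 2 ^ α ≤ ∑ u, (d u : ℝ) ^ α) ∧
    (∑ u, (d u : ℝ) ^ α = (n:ℝ) * 2 ^ α → ∀ u, d u = 2) := by
  have hsumR : ∑ u, (d u : ℝ) = 2 * n := by
    have := congrArg (fun k : ℕ => (k : ℝ)) hsum
    push_cast at this
    simpa using this
  have hpt : ∀ u, (2:ℝ) ^ α + α * 2 ^ (α - 1) * ((d u : ℝ) - 2) ≤ (d u : ℝ) ^ α := by
    intro u
    exact tangent_le hα (by exact_mod_cast Nat.lt_of_lt_of_le Nat.zero_lt_one (hd1 u))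
  have hts : ∑ u : Fin n, ((2:ℝ) ^ α + α * 2 ^ (α - 1) * ((d u : ℝ) - 2)) = (n:ℝ) * 2 ^ α := by
    rw [Finset.sum_add_distrib, ← Finset.mul_sum, Finset.sum_sub_distrib, hsumR,
      Finset.sum_const, Finset.sum_const, Finset.card_univ, Fintype.card_fin,
      nsmul_eq_mul, nsmul_eq_mul]
    ring
  constructor
  · calc (n:ℝ) * 2 ^ α = _ := hts.symm
      _ ≤ ∑ u, (d u : ℝ) ^ α := Finset.sum_le_sum fun u _ => hpt u
  · intro heq u
    by_contra hu
    have hlt : ∑ u : Fin n, ((2:ℝ) ^ α + α * 2 ^ (α - 1) * ((d u : ℝ) - 2))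
        < ∑ u, (d u : ℝ) ^ α := by
      refine Finset.sum_lt_sum (fun i _ => hpt i) ⟨u, Finset.mem_univ u, ?_⟩
      refine tangent_lt hα (by exact_mod_cast Nat.lt_of_lt_of_le Nat.zero_lt_one (hd1 u)) ?_
      exact_mod_cast fun h => hu (by exact_mod_cast h)
    rw [hts, heq] at hlt
    exact lt_irrefl _ hlt

set_option maxHeartbeats 1000000 in
lemma upper_real {α : ℝ} (hα : α < 0 ∨ 1 < α) {n : ℕ} (hn : 4 ≤ n) (d : Fin n → ℕ)
    (hd1 : ∀ u, 1 ≤ d u) (hdM : ∀ u, d u ≤ n - 1)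
    (hsum : ∑ u, d u = 2 * n)
    {a b c : Fin n} (hab : a ≠ b) (hac : a ≠ c) (hbc : b ≠ c)
    (ha : 2 ≤ d a) (hb : 2 ≤ d b) (hc : 2 ≤ d c) :
    (∑ u, (d u : ℝ) ^ α ≤ ((n:ℝ) - 1) ^ α + 2 * 2 ^ α + ((n:ℝ) - 3)) ∧
    (∑ u, (d u : ℝ) ^ α = ((n:ℝ) - 1) ^ α + 2 * 2 ^ α + ((n:ℝ) - 3) →
      ∃ v w x : Fin n, v ≠ w ∧ v ≠ x ∧ w ≠ x ∧ d v = n - 1 ∧ d w = 2 ∧ d x = 2 ∧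
        ∀ u, u ≠ v → u ≠ w → u ≠ x → d u = 1) := by
  classical
  have hnR : (4:ℝ) ≤ (n:ℝ) := by exact_mod_cast hn
  set M : ℝ := (n:ℝ) - 1 with hMdef
  have hM3 : 3 ≤ M := by simp only [hMdef]; linarith
  have h1M : (1:ℝ) < M := by linarith
  have h2M : (2:ℝ) < M := by linarith
  set c1 : ℝ := (M ^ α - 1 ^ α) / (M - 1) with hc1def
  set c2 : ℝ := (M ^ α - 2 ^ α) / (M - 2) with hc2def
  have hc12 : c1 < c2 := slope_lt_slope hα hM3
  have hcastM : ((n - 1 : ℕ) : ℝ) = M := by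
    have : (1:ℕ) ≤ n := by omega
    push_cast [this]
    rfl
  have hdMR : ∀ u, (d u : ℝ) ≤ M := by
    intro u
    rw [← hcastM]
    exact_mod_cast hdM u
  have hd1R : ∀ u, (1:ℝ) ≤ (d u : ℝ) := fun u => by exact_mod_cast hd1 u
  set T : Finset (Fin n) := {a, b, c} with hTdef
  have hmemT : ∀ u ∈ T, 2 ≤ d u := by
    intro u hu
    simp only [hTdef, Finset.mem_insert, Finset.mem_singleton] at hu
    rcases hu with rfl | rfl | rfl <;> assumption
  have hcardT : T.card = 3 := by
    rw [hTdef, Finset.card_insert_of_notMem (by simp [hab, hac]),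
      Finset.card_insert_of_notMem (by simp [hbc]), Finset.card_singleton]
  set bound : Fin n → ℝ :=
    fun u => if u ∈ T then 2 ^ α + ((d u : ℝ) - 2) * c2 else 1 ^ α + ((d u : ℝ) - 1) * c1
    with hbdef
  have hpt : ∀ u, (d u : ℝ) ^ α ≤ bound u := by
    intro u
    by_cases hu : u ∈ T
    · simp only [hbdef, if_pos hu]
      exact chord_le hα two_pos h2M (by exact_mod_cast hmemT u hu) (hdMR u)
    · simp only [hbdef, if_neg hu]
      exact chord_le hα one_pos h1M (hd1R u) (hdMR u)
  set SA : ℝ := ∑ u ∈ T, (d u : ℝ) with hSAdef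
  set SB : ℝ := ∑ u ∈ Finset.univ \ T, (d u : ℝ) with hSBdef
  have hTsub : T ⊆ Finset.univ := Finset.subset_univ T
  have hsumR : ∑ u, (d u : ℝ) = 2 * n := by exact_mod_cast congrArg (Nat.cast (R := ℝ)) hsum
  have hSAB : SB + SA = 2 * n := by
    rw [hSAdef, hSBdef, Finset.sum_sdiff hTsub, hsumR]
  have hcardR : (Finset.univ \ T).card = n - 3 := by
    rw [Finset.card_sdiff_of_subset hTsub, hcardT, Finset.card_univ, Fintype.card_fin]
  have hcardR_cast : (((Finset.univ \ T).card : ℕ) : ℝ) = (n:ℝ) - 3 := by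
    rw [hcardR]
    have : (3:ℕ) ≤ n := by omega
    push_cast [this]
    ring
  have hSB : (n:ℝ) - 3 ≤ SB := by
    rw [hSBdef, ← hcardR_cast]
    calc (((Finset.univ \ T).card : ℕ) : ℝ) = ∑ _u ∈ Finset.univ \ T, (1:ℝ) := by
          rw [Finset.sum_const, nsmul_eq_mul, mul_one]
      _ ≤ ∑ u ∈ Finset.univ \ T, (d u : ℝ) := Finset.sum_le_sum fun u _ => hd1R u
  have hSA7 : SA ≤ (n:ℝ) + 3 := by linarith
  have hsumbound : ∑ u, bound u
      = 3 * 2 ^ α + (SA - 6) * c2 + ((n:ℝ) - 3) + (SB - ((n:ℝ) - 3)) * c1 := by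
    rw [← Finset.sum_sdiff hTsub]
    have hTb : ∑ u ∈ T, bound u = 3 * 2 ^ α + (SA - 6) * c2 := by
      have : ∀ u ∈ T, bound u = 2 ^ α + ((d u : ℝ) - 2) * c2 := fun u hu => by
        simp only [hbdef, if_pos hu]
      rw [Finset.sum_congr rfl this, Finset.sum_add_distrib, Finset.sum_const, hcardT,
        ← Finset.sum_mul, Finset.sum_sub_distrib, Finset.sum_const, hcardT, ← hSAdef]
      push_cast
      ring
    have hRb : ∑ u ∈ Finset.univ \ T, bound u = ((n:ℝ) - 3) + (SB - ((n:ℝ) - 3)) * c1 := by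
      have : ∀ u ∈ Finset.univ \ T, bound u = 1 ^ α + ((d u : ℝ) - 1) * c1 := fun u hu => by
        simp only [hbdef, if_neg (Finset.mem_sdiff.mp hu).2]
      rw [Finset.sum_congr rfl this, Finset.sum_add_distrib, Finset.sum_const,
        ← Finset.sum_mul, Finset.sum_sub_distrib, Finset.sum_const, ← hSBdef,
        Real.one_rpow, nsmul_eq_mul, mul_one, hcardR_cast]
    rw [hTb, hRb]
    ring
  have hMe : c2 * ((n:ℝ) - 3) = M ^ α - 2 ^ α := by
    have h32 : M - 2 = (n:ℝ) - 3 := by rw [hMdef]; ring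
    rw [← h32]
    exact div_mul_cancel₀ _ (by intro h; rw [h32] at h; linarith)
  have hfinal : ∑ u, bound u ≤ M ^ α + 2 * 2 ^ α + ((n:ℝ) - 3) := by
    rw [hsumbound]
    have key : 0 ≤ (c2 - c1) * ((n:ℝ) + 3 - SA) := mul_nonneg (by linarith) (by linarith)
    have hexp : (SB - ((n:ℝ) - 3)) * c1 = ((n:ℝ) + 3 - SA) * c1 := by
      have hSBe : SB = 2 * (n:ℝ) - SA := by linarith
      rw [hSBe]; ring
    rw [hexp]
    nlinarith [key, hMe]
  have hmain : ∑ u, (d u : ℝ) ^ α ≤ M ^ α + 2 * 2 ^ α + ((n:ℝ) - 3) :=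
    le_trans (Finset.sum_le_sum fun u _ => hpt u) hfinal
  constructor
  · exact hmain
  · intro heq
    have hBeq : ∑ u, bound u = M ^ α + 2 * 2 ^ α + ((n:ℝ) - 3) :=
      le_antisymm hfinal (heq ▸ Finset.sum_le_sum fun u _ => hpt u)
    have heach : ∀ u, (d u : ℝ) ^ α = bound u := by
      intro u
      by_contra hne
      have hlt : ∑ u, (d u : ℝ) ^ α < ∑ u, bound u :=
        Finset.sum_lt_sum (fun i _ => hpt i) ⟨u, Finset.mem_univ u, lt_of_le_of_ne (hpt u) hne⟩
      rw [heq, hBeq] at hlt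
      exact lt_irrefl _ hlt
    have hSAeq : SA = (n:ℝ) + 3 := by
      by_contra hne
      have hlt : SA < (n:ℝ) + 3 := lt_of_le_of_ne hSA7 hne
      have key : 0 < (c2 - c1) * ((n:ℝ) + 3 - SA) := mul_pos (by linarith) (by linarith)
      have : ∑ u, bound u < M ^ α + 2 * 2 ^ α + ((n:ℝ) - 3) := by
        rw [hsumbound]
        have hexp : (SB - ((n:ℝ) - 3)) * c1 = ((n:ℝ) + 3 - SA) * c1 := by
          have hSBe : SB = 2 * (n:ℝ) - SA := by linarith
          rw [hSBe]; ring
        rw [hexp]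
        nlinarith [key, hMe]
      rw [hBeq] at this
      exact lt_irrefl _ this
    -- each vertex in T has degree 2 or n-1
    have hTor : ∀ u ∈ T, d u = 2 ∨ d u = n - 1 := by
      intro u hu
      by_contra hor
      push_neg at hor
      obtain ⟨h2, hM1⟩ := hor
      have hlt2 : (2:ℝ) < (d u : ℝ) := by
        have := hmemT u hu
        have : 2 < d u := lt_of_le_of_ne this (Ne.symm h2)
        exact_mod_cast this
      have hltM : (d u : ℝ) < M := by
        rw [← hcastM]
        have : d u < n - 1 := lt_of_le_of_ne (hdM u) hM1
        exact_mod_cast this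
      have := chord_lt hα two_pos h2M hlt2 hltM
      have hbu : bound u = 2 ^ α + ((d u : ℝ) - 2) * c2 := by simp only [hbdef, if_pos hu]
      rw [heach u, hbu] at this
      rw [hc2def] at this
      exact lt_irrefl _ this
    -- vertices outside T have degree 1
    have hSAnat : d a + d b + d c = n + 3 := by
      have hSAval : SA = (d a : ℝ) + (d b : ℝ) + (d c : ℝ) := by
        rw [hSAdef, hTdef, Finset.sum_insert (by simp [hab, hac]),
          Finset.sum_insert (by simp [hbc]), Finset.sum_singleton]
        ring
      have : ((d a + d b + d c : ℕ) : ℝ) = ((n + 3 : ℕ) : ℝ) := by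
        push_cast
        rw [← hSAval, hSAeq]
      exact_mod_cast this
  -- sum over the rest is n - 3
    have hsumRnat : ∑ u ∈ Finset.univ \ T, d u = n - 3 := by
      have h1 : ∑ u ∈ Finset.univ \ T, d u + ∑ u ∈ T, d u = 2 * n := by
        rw [Finset.sum_sdiff hTsub, hsum]
      have h2 : ∑ u ∈ T, d u = n + 3 := by
        rw [hTdef, Finset.sum_insert (by simp [hab, hac]),
          Finset.sum_insert (by simp [hbc]), Finset.sum_singleton]
        omega
      omega
    have hrest : ∀ u, u ∉ T → d u = 1 := by
      intro u hu
      by_contra hne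
      have h2 : 2 ≤ d u := by have := hd1 u; omega
      have hlt : ∑ v ∈ Finset.univ \ T, (1:ℕ) < ∑ v ∈ Finset.univ \ T, d v := by
        refine Finset.sum_lt_sum (fun i _ => hd1 i) ⟨u, ?_, by omega⟩
        simp [hu]
      rw [Finset.sum_const, hsumRnat, smul_eq_mul, mul_one, hcardR] at hlt
      exact lt_irrefl _ hlt
    have hamem : a ∈ T := by simp [hTdef]
    have hbmem : b ∈ T := by simp [hTdef]
    have hcmem : c ∈ T := by simp [hTdef]
    have hnotT : ∀ u, u ≠ a → u ≠ b → u ≠ c → u ∉ T := by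
      intro u h1 h2 h3
      simp [hTdef, h1, h2, h3]
    rcases hTor a hamem with hda | hda <;> rcases hTor b hbmem with hdb | hdb <;>
      rcases hTor c hcmem with hdc | hdc
    · omega
    · exact ⟨c, a, b, hac.symm, hbc.symm, hab, hdc, hda, hdb,
        fun u h1 h2 h3 => hrest u (hnotT u h2 h3 h1)⟩
    · exact ⟨b, a, c, hab.symm, hbc, hac, hdb, hda, hdc,
        fun u h1 h2 h3 => hrest u (hnotT u h2 h1 h3)⟩
    · omega
    · exact ⟨a, b, c, hab, hac, hbc, hda, hdb, hdc,
        fun u h1 h2 h3 => hrest u (hnotT u h1 h2 h3)⟩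
    · omega
    · omega
    · omega

section GraphHelpers

open SimpleGraph Walk

lemma walk_getVert_eq_support_getElem {V : Type*} {G : SimpleGraph V} {u v : V}
    (p : G.Walk u v) {i : ℕ} (hi : i < p.support.length) :
    p.getVert i = p.support[i] := by
  induction p generalizing i with
  | nil =>
    simp only [Walk.support_nil, List.length_singleton] at hi
    interval_cases i
    simp [Walk.support_nil]
  | cons h q ih =>
    cases i with
    | zero => simp [Walk.support_cons]
    | succ i =>
      rw [Walk.getVert_cons_succ]
      have hi' : i < q.support.length := by
        rw [Walk.support_cons, List.length_cons] at hi
        omega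
      rw [ih hi']
      simp only [Walk.support_cons, List.getElem_cons_succ]

lemma cycle_getVert_inj {V : Type*} {G : SimpleGraph V} {v : V} {c : G.Walk v v}
    (hc : c.IsCycle) {i j : ℕ} (hi : i < c.length) (hj : j < c.length)
    (h : c.getVert i = c.getVert j) : i = j := by
  have hlen := c.length_support
  have hs := c.support_eq_cons
  have htlen : c.support.tail.length = c.length := by
    rw [List.length_tail, hlen]
    omega
  have hnd : c.support.tail.Nodup := hc.support_nodup
  have hL3 : 3 ≤ c.length := hc.three_le_length
  have hget : ∀ k, 1 ≤ k → k ≤ c.length → ∀ (hk : k - 1 < c.support.tail.length),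
      c.getVert k = c.support.tail[k - 1] := by
    intro k hk1 hk2 hk
    have h1 := List.getElem_tail (l := c.support) (i := k - 1) hk
    rw [h1, walk_getVert_eq_support_getElem c (by omega)]
    congr 1
    omega
  have hv0 : c.getVert 0 = v := c.getVert_zero
  have hvL : c.getVert c.length = v := c.getVert_length
  rcases Nat.eq_zero_or_pos i with rfl | hi1 <;> rcases Nat.eq_zero_or_pos j with rfl | hj1
  · rfl
  · exfalso
    have h1 : c.support.tail[j - 1]'(by omega) = v := by
      rw [← hget j hj1 (by omega) (by omega), ← h, hv0]
    have h2 : c.support.tail[c.length - 1]'(by omega) = v := by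
      rw [← hget c.length (by omega) le_rfl (by omega), hvL]
    have := (List.Nodup.getElem_inj_iff hnd).mp (h1.trans h2.symm)
    omega
  · exfalso
    have h1 : c.support.tail[i - 1]'(by omega) = v := by
      rw [← hget i hi1 (by omega) (by omega), h, hv0]
    have h2 : c.support.tail[c.length - 1]'(by omega) = v := by
      rw [← hget c.length (by omega) le_rfl (by omega), hvL]
    have := (List.Nodup.getElem_inj_iff hnd).mp (h1.trans h2.symm)
    omega
  · have h1 : c.support.tail[i - 1]'(by omega) = c.support.tail[j - 1]'(by omega) := by
      rw [← hget i hi1 (by omega) (by omega), ← hget j hj1 (by omega) (by omega), h]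
    have := (List.Nodup.getElem_inj_iff hnd).mp h1
    omega

lemma two_le_degree_of {V : Type*} [Fintype V] [DecidableEq V] {G : SimpleGraph V}
    [DecidableRel G.Adj] {u x y : V} (hxy : x ≠ y) (h1 : G.Adj u x) (h2 : G.Adj u y) :
    2 ≤ G.degree u := by
  rw [← card_neighborFinset_eq_degree]
  have hsub : ({x, y} : Finset V) ⊆ G.neighborFinset u := by
    intro z hz
    rw [Finset.mem_insert, Finset.mem_singleton] at hz
    rcases hz with rfl | rfl <;> rw [mem_neighborFinset] <;> assumption
  calc 2 = ({x, y} : Finset V).card := (Finset.card_pair hxy).symm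
    _ ≤ _ := Finset.card_le_card hsub

lemma nbhd_eq_of_degree_two {V : Type*} [Fintype V] [DecidableEq V] {G : SimpleGraph V}
    [DecidableRel G.Adj] {u x y : V} (hxy : x ≠ y) (h1 : G.Adj u x) (h2 : G.Adj u y)
    (hdeg : G.degree u = 2) : G.neighborFinset u = {x, y} := by
  have hsub : ({x, y} : Finset V) ⊆ G.neighborFinset u := by
    intro z hz
    rw [Finset.mem_insert, Finset.mem_singleton] at hz
    rcases hz with rfl | rfl <;> rw [mem_neighborFinset] <;> assumption
  refine (Finset.eq_of_subset_of_card_le hsub ?_).symm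
  rw [card_neighborFinset_eq_degree, hdeg, Finset.card_pair hxy]

lemma cycle_two_le_degree_s6 {V : Type*} [Fintype V] [DecidableEq V] {G : SimpleGraph V}
    [DecidableRel G.Adj] {v : V} {c : G.Walk v v} (hc : c.IsCycle) {i : ℕ}
    (hi : i < c.length) : 2 ≤ G.degree (c.getVert i) := by
  have hL3 : 3 ≤ c.length := hc.three_le_length
  have hadj : ∀ k, k < c.length → G.Adj (c.getVert k) (c.getVert (k + 1)) :=
    fun k hk => c.adj_getVert_succ hk
  have hwrap : c.getVert c.length = c.getVert 0 := by rw [c.getVert_length, c.getVert_zero]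
  rcases Nat.eq_zero_or_pos i with rfl | hi1
  · -- neighbors : getVert 1 and getVert (length - 1)
    have h1 : G.Adj (c.getVert 0) (c.getVert 1) := by simpa using hadj 0 (by omega)
    have h2 : G.Adj (c.getVert 0) (c.getVert (c.length - 1)) := by
      have := hadj (c.length - 1) (by omega)
      have heq : c.length - 1 + 1 = c.length := by omega
      rw [heq, hwrap] at this
      exact this.symm
    exact two_le_degree_of
      (fun hxy => by have := cycle_getVert_inj hc (by omega) (by omega) hxy; omega) h1 h2
  · rcases eq_or_lt_of_le (Nat.succ_le_of_lt hi) with heq | hlt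
    · -- i = length - 1
      have h1 : G.Adj (c.getVert i) (c.getVert (i - 1)) := by
        have := hadj (i - 1) (by omega)
        have heq2 : i - 1 + 1 = i := by omega
        rw [heq2] at this
        exact this.symm
      have h2 : G.Adj (c.getVert i) (c.getVert 0) := by
        have := hadj i hi
        have heq2 : i + 1 = c.length := by omega
        rw [heq2, hwrap] at this
        exact this
      exact two_le_degree_of
        (fun hxy => by have := cycle_getVert_inj hc (by omega) (by omega) hxy; omega) h1 h2
    · have h1 : G.Adj (c.getVert i) (c.getVert (i - 1)) := by
        have := hadj (i - 1) (by omega)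
        have heq2 : i - 1 + 1 = i := by omega
        rw [heq2] at this
        exact this.symm
      have h2 : G.Adj (c.getVert i) (c.getVert (i + 1)) := hadj i hi
      exact two_le_degree_of
        (fun hxy => by have := cycle_getVert_inj hc (by omega) (by omega) hxy; omega) h1 h2

end GraphHelpers

section MoreHelpers
open SimpleGraph Walk

lemma one_le_degree_of_connected {n : ℕ} (hn : 2 ≤ n) {G : SimpleGraph (Fin n)}
    [DecidableRel G.Adj] (h : G.Connected) (u : Fin n) : 1 ≤ G.degree u := by
  rw [← card_neighborFinset_eq_degree, Nat.succ_le_iff, Finset.card_pos]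
  obtain ⟨w, hw⟩ : ∃ w : Fin n, w ≠ u := by
    refine Fintype.exists_ne_of_one_lt_card ?_ u
    rw [Fintype.card_fin]
    omega
  obtain ⟨p⟩ := h.preconnected u w
  have hlen : 0 < p.length := by
    by_contra hl
    push_neg at hl
    exact hw (p.eq_of_length_eq_zero (by omega)).symm
  have := p.adj_getVert_succ hlen
  rw [p.getVert_zero] at this
  exact ⟨p.getVert 1, (mem_neighborFinset _ _ _).mpr this⟩

lemma exists_cycle_of_unicyclic {n : ℕ} {G : SimpleGraph (Fin n)} [DecidableRel G.Adj]
    (hc : G.Connected) (he : G.edgeFinset.card = n) :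
    ∃ (v : Fin n) (c : G.Walk v v), c.IsCycle := by
  by_contra h
  push_neg at h
  have hac : G.IsAcyclic := fun v c hcy => h v c hcy
  have ht : G.IsTree := ⟨hc, hac⟩
  have := ht.card_edgeFinset
  rw [he, Fintype.card_fin] at this
  omega

lemma iso_degree {V W : Type*} [Fintype V] [Fintype W] [DecidableEq V] [DecidableEq W]
    {G : SimpleGraph V} {H : SimpleGraph W} [DecidableRel G.Adj] [DecidableRel H.Adj]
    (e : G ≃g H) (v : V) : G.degree v = H.degree (e v) := by
  rw [← card_neighborSet_eq_degree, ← card_neighborSet_eq_degree]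
  exact Fintype.card_congr (e.mapNeighborSet v)

lemma cycleGraph_degree_eq_two {n : ℕ} (hn : 3 ≤ n) (u : Fin n) :
    (cycleGraph n).degree u = 2 := by
  obtain ⟨m, rfl⟩ : ∃ m, n = m + 3 := ⟨n - 3, by omega⟩
  exact cycleGraph_degree_three_le

lemma exists_three_deg_two {n : ℕ} {G : SimpleGraph (Fin n)} [DecidableRel G.Adj]
    (hc : G.Connected) (he : G.edgeFinset.card = n) :
    ∃ a b c : Fin n, a ≠ b ∧ a ≠ c ∧ b ≠ c ∧
      2 ≤ G.degree a ∧ 2 ≤ G.degree b ∧ 2 ≤ G.degree c := by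
  obtain ⟨v, c, hcy⟩ := exists_cycle_of_unicyclic hc he
  have hL3 : 3 ≤ c.length := hcy.three_le_length
  refine ⟨c.getVert 0, c.getVert 1, c.getVert 2, ?_, ?_, ?_, ?_, ?_, ?_⟩
  · intro h; have := cycle_getVert_inj hcy (by omega) (by omega) h; omega
  · intro h; have := cycle_getVert_inj hcy (by omega) (by omega) h; omega
  · intro h; have := cycle_getVert_inj hcy (by omega) (by omega) h; omega
  · exact cycle_two_le_degree_s6 hcy (by omega)
  · exact cycle_two_le_degree_s6 hcy (by omega)
  · exact cycle_two_le_degree_s6 hcy (by omega)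

end MoreHelpers

section CycleIso
open SimpleGraph Walk

lemma cycle_nbrs {V : Type*} {G : SimpleGraph V} {v : V} {c : G.Walk v v}
    (hc : c.IsCycle) {i : ℕ} (hi : i < c.length) :
    ∃ j k : ℕ, j < c.length ∧ k < c.length ∧ c.getVert j ≠ c.getVert k ∧
      G.Adj (c.getVert i) (c.getVert j) ∧ G.Adj (c.getVert i) (c.getVert k) := by
  have hL3 : 3 ≤ c.length := hc.three_le_length
  have hadj : ∀ k, k < c.length → G.Adj (c.getVert k) (c.getVert (k + 1)) :=
    fun k hk => c.adj_getVert_succ hk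
  have hwrap : c.getVert c.length = c.getVert 0 := by rw [c.getVert_length, c.getVert_zero]
  rcases Nat.eq_zero_or_pos i with rfl | hi1
  · refine ⟨1, c.length - 1, by omega, by omega, ?_, ?_, ?_⟩
    · intro h; have := cycle_getVert_inj hc (by omega) (by omega) h; omega
    · simpa using hadj 0 (by omega)
    · have := hadj (c.length - 1) (by omega)
      have heq : c.length - 1 + 1 = c.length := by omega
      rw [heq, hwrap] at this
      exact this.symm
  · rcases eq_or_lt_of_le (Nat.succ_le_of_lt hi) with heq | hlt
    · refine ⟨i - 1, 0, by omega, by omega, ?_, ?_, ?_⟩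
      · intro h; have := cycle_getVert_inj hc (by omega) (by omega) h; omega
      · have := hadj (i - 1) (by omega)
        have heq2 : i - 1 + 1 = i := by omega
        rw [heq2] at this
        exact this.symm
      · have := hadj i hi
        have heq2 : i + 1 = c.length := by omega
        rw [heq2, hwrap] at this
        exact this
    · refine ⟨i - 1, i + 1, by omega, by omega, ?_, ?_, ?_⟩
      · intro h; have := cycle_getVert_inj hc (by omega) (by omega) h; omega
      · have := hadj (i - 1) (by omega)
        have heq2 : i - 1 + 1 = i := by omega
        rw [heq2] at this
        exact this.symm
      · exact hadj i hi

lemma iso_cycle_of_two_regular {n : ℕ} (hn : 4 ≤ n) {G : SimpleGraph (Fin n)}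
    [DecidableRel G.Adj] (hconn : G.Connected) (he : G.edgeFinset.card = n)
    (hdeg : ∀ u, G.degree u = 2) : Nonempty (G ≃g cycleGraph n) := by
  obtain ⟨m, rfl⟩ : ∃ m, n = m + 4 := ⟨n - 4, by omega⟩
  obtain ⟨v, c, hcy⟩ := exists_cycle_of_unicyclic hconn he
  have hL3 : 3 ≤ c.length := hcy.three_le_length
  -- closure of support under adjacency
  have hclosed : ∀ x ∈ c.support, ∀ y, G.Adj x y → y ∈ c.support := by
    intro x hx y hxy
    obtain ⟨i, hgv, hile⟩ := Walk.mem_support_iff_exists_getVert.mp hx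
    have hx' : ∃ i', i' < c.length ∧ c.getVert i' = x := by
      rcases eq_or_lt_of_le hile with rfl | hlt
      · exact ⟨0, by omega, by rw [c.getVert_zero, ← c.getVert_length, hgv]⟩
      · exact ⟨i, hlt, hgv⟩
    obtain ⟨i', hi', hgv'⟩ := hx'
    obtain ⟨j, k, hj, hk, hjk, h1, h2⟩ := cycle_nbrs hcy hi'
    rw [hgv'] at h1 h2
    have hnb := nbhd_eq_of_degree_two hjk h1 h2 (hdeg x)
    have hymem : y ∈ G.neighborFinset x := (mem_neighborFinset _ _ _).mpr hxy
    rw [hnb, Finset.mem_insert, Finset.mem_singleton] at hymem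
    rcases hymem with rfl | rfl
    · exact Walk.mem_support_iff_exists_getVert.mpr ⟨j, rfl, le_of_lt hj⟩
    · exact Walk.mem_support_iff_exists_getVert.mpr ⟨k, rfl, le_of_lt hk⟩
  have hall : ∀ u, u ∈ c.support := by
    have H : ∀ (x u : Fin (m + 4)) (p : G.Walk x u), x ∈ c.support → u ∈ c.support := by
      intro x u p
      induction p with
      | nil => exact id
      | cons h q ih => intro hx; exact ih (hclosed _ hx _ h)
    intro u
    obtain ⟨p⟩ := hconn.preconnected v u
    exact H v u p c.start_mem_support
  -- length = n
  have htlen : c.support.tail.length = c.length := by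
    rw [List.length_tail, c.length_support]
    omega
  have hvtail : v ∈ c.support.tail := by
    have h1 : c.support.tail[c.length - 1]'(by omega) = v := by
      have h2 := List.getElem_tail (l := c.support) (i := c.length - 1) (by omega)
      rw [h2]
      have h3 : c.length - 1 + 1 = c.length := by omega
      have h4 := walk_getVert_eq_support_getElem c
        (i := c.length - 1 + 1) (by rw [c.length_support]; omega)
      rw [← h4, h3, c.getVert_length]
    exact List.mem_iff_getElem.mpr ⟨c.length - 1, by omega, h1⟩
  have hL : c.length = m + 4 := by
    have h1 : c.support.toFinset = Finset.univ :=
      Finset.eq_univ_of_forall fun u => List.mem_toFinset.mpr (hall u)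
    have h2 : c.support.toFinset = c.support.tail.toFinset := by
      conv_lhs => rw [c.support_eq_cons]
      rw [List.toFinset_cons]
      exact Finset.insert_eq_self.mpr (List.mem_toFinset.mpr hvtail)
    have h3 : c.support.tail.toFinset.card = c.length := by
      rw [List.toFinset_card_of_nodup hcy.support_nodup, htlen]
    have h4 := congrArg Finset.card (h1.symm.trans h2)
    rw [Finset.card_univ, Fintype.card_fin, h3] at h4
    omega
  -- the vertex map
  set phi : Fin (m + 4) → Fin (m + 4) := fun i => c.getVert i.val with hphidef
  have hinj : Function.Injective phi := by
    intro i j h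
    have := cycle_getVert_inj hcy (by omega : i.val < c.length) (by omega : j.val < c.length) h
    exact Fin.ext this
  have hbij : Function.Bijective phi := (Finite.injective_iff_bijective).mp hinj
  have hval_add : ∀ i : Fin (m + 4), (i + 1).val = (i.val + 1) % (m + 4) := by
    intro i
    rw [Fin.add_def]
    simp
  have hval_sub : ∀ i : Fin (m + 4), (i - 1).val = (i.val + (m + 3)) % (m + 4) := by
    intro i
    rw [Fin.sub_def]
    simp [Nat.add_comm]
  have hwrap : c.getVert c.length = c.getVert 0 := by rw [c.getVert_length, c.getVert_zero]
  have hphisucc : ∀ i : Fin (m + 4), phi (i + 1) = c.getVert (i.val + 1) := by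
    intro i
    show c.getVert (i + 1).val = c.getVert (i.val + 1)
    rw [hval_add]
    rcases Nat.lt_or_ge (i.val + 1) (m + 4) with h | h
    · rw [Nat.mod_eq_of_lt h]
    · have h1 : i.val + 1 = m + 4 := by omega
      rw [h1, Nat.mod_self, c.getVert_zero]
      have h2 : v = c.getVert c.length := c.getVert_length.symm
      rw [hL] at h2
      exact h2
  have hadjsucc : ∀ i : Fin (m + 4), G.Adj (phi i) (phi (i + 1)) := by
    intro i
    rw [hphisucc]
    exact c.adj_getVert_succ (by rw [hL]; exact i.isLt)
  have hadjpred : ∀ i : Fin (m + 4), G.Adj (phi (i - 1)) (phi i) := by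
    intro i
    have := hadjsucc (i - 1)
    rwa [sub_add_cancel] at this
  have hva : ∀ i : Fin (m + 4), (i + 1).val = i.val + 1 ∨ ((i + 1).val = 0 ∧ i.val = m + 3) := by
    intro i
    rw [hval_add]
    have hi4 := i.isLt
    rcases Nat.lt_or_ge (i.val + 1) (m + 4) with h | h
    · left; rw [Nat.mod_eq_of_lt h]
    · right
      have h1 : i.val + 1 = m + 4 := by omega
      rw [h1, Nat.mod_self]
      omega
  have hvs : ∀ i : Fin (m + 4), ((i - 1).val = i.val - 1 ∧ 1 ≤ i.val) ∨
      ((i - 1).val = m + 3 ∧ i.val = 0) := by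
    intro i
    rw [hval_sub]
    have hi4 := i.isLt
    rcases Nat.eq_zero_or_pos i.val with h0 | h0
    · right
      rw [h0, Nat.zero_add, Nat.mod_eq_of_lt (by omega)]
      omega
    · left
      rw [Nat.mod_eq_sub_mod (by omega), Nat.mod_eq_of_lt (by omega)]
      omega
  have hnepm : ∀ i : Fin (m + 4), phi (i - 1) ≠ phi (i + 1) := by
    intro i h
    have h2 := cycle_getVert_inj hcy
      (by rw [hL]; exact (i - 1).isLt) (by rw [hL]; exact (i + 1).isLt) h
    have hi4 := i.isLt
    rcases hva i with h3 | ⟨h3, h4⟩ <;> rcases hvs i with ⟨h5, h6⟩ | ⟨h5, h6⟩ <;> omega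
  have hnbr : ∀ i : Fin (m + 4), G.neighborFinset (phi i) = {phi (i - 1), phi (i + 1)} :=
    fun i => nbhd_eq_of_degree_two (hnepm i) (hadjpred i).symm (hadjsucc i) (hdeg (phi i))
  have hone : ((1 : Fin (m + 4))).val = 1 := rfl
  have hiso : Nonempty (cycleGraph (m + 4) ≃g G) := by
    refine ⟨⟨Equiv.ofBijective phi hbij, ?_⟩⟩
    intro a b
    simp only [Equiv.ofBijective_apply]
    constructor
    · intro h
      have hb : phi b ∈ G.neighborFinset (phi a) := (mem_neighborFinset _ _ _).mpr h
      rw [hnbr, Finset.mem_insert, Finset.mem_singleton] at hb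
      rw [cycleGraph_adj']
      rcases hb with hb | hb
      · left
        have : b = a - 1 := hinj hb
        rw [this]
        have h1 : a - (a - 1) = 1 := sub_sub_cancel a 1
        rw [h1, hone]
      · right
        have : b = a + 1 := hinj hb
        rw [this]
        have h1 : a + 1 - a = 1 := add_sub_cancel_left a 1
        rw [h1, hone]
    · intro h
      rw [cycleGraph_adj'] at h
      rcases h with h | h
      · have h1 : a - b = 1 := Fin.ext (by rw [hone]; exact h)
        have hb : b = a - 1 := by
          rw [← h1]
          exact (sub_sub_cancel a b).symm
        rw [hb]
        exact (hadjpred a).symm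
      · have h1 : b - a = 1 := Fin.ext (by rw [hone]; exact h)
        have hb : b = a + 1 := by
          have := congrArg (· + a) h1
          simpa [sub_add_cancel, add_comm] using this
        rw [hb]
        exact hadjsucc a
  exact ⟨hiso.some.symm⟩

end CycleIso

section Star
open SimpleGraph


lemma star_adj {n : ℕ} (i j : Fin n) : (unicyclicStar n).Adj i j ↔
    i ≠ j ∧ (i.val = 0 ∨ j.val = 0 ∨ (i.val = 1 ∧ j.val = 2) ∨ (j.val = 1 ∧ i.val = 2)) := by
  show (fromRel _).Adj i j ↔ _
  rw [SimpleGraph.fromRel_adj]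
  constructor
  · rintro ⟨hne, h | h⟩ <;> tauto
  · rintro ⟨hne, h⟩ <;> tauto

lemma star_degrees {n : ℕ} (hn : 4 ≤ n) [inst : DecidableRel (unicyclicStar n).Adj] :
    (unicyclicStar n).degree ⟨0, by omega⟩ = n - 1 ∧
    (unicyclicStar n).degree ⟨1, by omega⟩ = 2 ∧
    (unicyclicStar n).degree ⟨2, by omega⟩ = 2 ∧
    ∀ u : Fin n, 3 ≤ u.val → (unicyclicStar n).degree u = 1 := by
  set v0 : Fin n := ⟨0, by omega⟩
  set v1 : Fin n := ⟨1, by omega⟩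
  set v2 : Fin n := ⟨2, by omega⟩
  have hval0 : v0.val = 0 := rfl
  have hval1 : v1.val = 1 := rfl
  have hval2 : v2.val = 2 := rfl
  have h0 : (unicyclicStar n).neighborFinset v0 = Finset.univ.erase v0 := by
    ext u
    rw [mem_neighborFinset, star_adj, Finset.mem_erase]
    constructor
    · rintro ⟨hne, _⟩; exact ⟨fun h => hne (h ▸ rfl), Finset.mem_univ u⟩
    · rintro ⟨hne, -⟩; exact ⟨fun h => hne (by rw [h]), Or.inl rfl⟩
  have h1 : (unicyclicStar n).neighborFinset v1 = {v0, v2} := by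
    ext u
    rw [mem_neighborFinset, star_adj, Finset.mem_insert, Finset.mem_singleton]
    constructor
    · rintro ⟨hne, h | h | ⟨h1', h2'⟩ | ⟨h1', h2'⟩⟩
      · exact absurd h (by rw [hval1]; omega)
      · left; exact Fin.ext (by rw [h, hval0])
      · right; exact Fin.ext (by rw [h2', hval2])
      · exact absurd h2' (by rw [hval1]; omega)
    · rintro (rfl | rfl)
      · exact ⟨by rw [ne_eq, Fin.ext_iff, hval0, hval1]; omega, Or.inr (Or.inl rfl)⟩
      · exact ⟨by rw [ne_eq, Fin.ext_iff, hval2, hval1]; omega,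
          Or.inr (Or.inr (Or.inl ⟨rfl, rfl⟩))⟩
  have h2 : (unicyclicStar n).neighborFinset v2 = {v0, v1} := by
    ext u
    rw [mem_neighborFinset, star_adj, Finset.mem_insert, Finset.mem_singleton]
    constructor
    · rintro ⟨hne, h | h | ⟨h1', h2'⟩ | ⟨h1', h2'⟩⟩
      · exact absurd h (by rw [hval2]; omega)
      · left; exact Fin.ext (by rw [h, hval0])
      · exact absurd h1' (by rw [hval2]; omega)
      · right; exact Fin.ext (by rw [h1', hval1])
    · rintro (rfl | rfl)
      · exact ⟨by rw [ne_eq, Fin.ext_iff, hval0, hval2]; omega, Or.inr (Or.inl rfl)⟩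
      · exact ⟨by rw [ne_eq, Fin.ext_iff, hval1, hval2]; omega,
          Or.inr (Or.inr (Or.inr ⟨rfl, rfl⟩))⟩
  refine ⟨?_, ?_, ?_, ?_⟩
  · rw [← card_neighborFinset_eq_degree, h0, Finset.card_erase_of_mem (Finset.mem_univ v0),
      Finset.card_univ, Fintype.card_fin]
  · rw [← card_neighborFinset_eq_degree, h1, Finset.card_pair
      (by rw [ne_eq, Fin.ext_iff, hval0, hval2]; omega)]
  · rw [← card_neighborFinset_eq_degree, h2, Finset.card_pair
      (by rw [ne_eq, Fin.ext_iff, hval0, hval1]; omega)]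
  · intro u hu
    have h3 : (unicyclicStar n).neighborFinset u = {v0} := by
      ext z
      rw [mem_neighborFinset, star_adj, Finset.mem_singleton]
      constructor
      · rintro ⟨hne, h | h | ⟨h1', h2'⟩ | ⟨h1', h2'⟩⟩
        · exact absurd h (by omega)
        · exact Fin.ext (by rw [h, hval0])
        · exact absurd h1' (by omega)
        · exact absurd h2' (by omega)
      · rintro rfl
        exact ⟨by rw [ne_eq, Fin.ext_iff, hval0]; omega, Or.inr (Or.inl rfl)⟩
    rw [← card_neighborFinset_eq_degree, h3, Finset.card_singleton]

end Star

section StarIso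
open SimpleGraph

lemma iso_star {n : ℕ} (hn : 4 ≤ n) {G : SimpleGraph (Fin n)} [DecidableRel G.Adj]
    {v w x : Fin n} (hvw : v ≠ w) (hvx : v ≠ x) (hwx : w ≠ x)
    (hdv : G.degree v = n - 1) (hdw : G.degree w = 2) (hdx : G.degree x = 2)
    (hrest : ∀ u, u ≠ v → u ≠ w → u ≠ x → G.degree u = 1) :
    Nonempty (G ≃g unicyclicStar n) := by
  classical
  -- v is adjacent to everything else
  have b1 : ∀ u, u ≠ v → G.Adj v u := by
    have hsub : G.neighborFinset v ⊆ Finset.univ.erase v := by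
      intro z hz
      rw [Finset.mem_erase]
      exact ⟨((mem_neighborFinset _ _ _).mp hz).ne', Finset.mem_univ z⟩
    have hcard : (Finset.univ.erase v).card ≤ (G.neighborFinset v).card := by
      rw [card_neighborFinset_eq_degree, hdv, Finset.card_erase_of_mem (Finset.mem_univ v),
        Finset.card_univ, Fintype.card_fin]
    have heq := Finset.eq_of_subset_of_card_le hsub hcard
    intro u hu
    rw [← mem_neighborFinset, heq, Finset.mem_erase]
    exact ⟨hu, Finset.mem_univ u⟩
  -- w is adjacent to x
  have b2 : G.Adj w x := by
    have hwv : G.Adj w v := (b1 w hvw.symm).symm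
    have hvmem : v ∈ G.neighborFinset w := (mem_neighborFinset _ _ _).mpr hwv
    have hcard : ((G.neighborFinset w).erase v).card = 1 := by
      rw [Finset.card_erase_of_mem hvmem, card_neighborFinset_eq_degree, hdw]
    obtain ⟨y, hy⟩ := Finset.card_eq_one.mp hcard
    have hymem : y ∈ (G.neighborFinset w).erase v := by rw [hy]; exact Finset.mem_singleton_self y
    rw [Finset.mem_erase, mem_neighborFinset] at hymem
    obtain ⟨hyv, hwy⟩ := hymem
    have hyw : y ≠ w := hwy.ne'
    have hy2 : 2 ≤ G.degree y := two_le_degree_of (Ne.symm hvw) hwy.symm ((b1 y hyv).symm)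
    have hyx : y = x := by
      by_contra hyx
      have := hrest y hyv hyw hyx
      omega
    rwa [hyx] at hwy
  have hnbrw : G.neighborFinset w = {v, x} :=
    nbhd_eq_of_degree_two hvx (b1 w hvw.symm).symm b2 hdw
  have hnbrx : G.neighborFinset x = {v, w} :=
    nbhd_eq_of_degree_two hvw (b1 x hvx.symm).symm b2.symm hdx
  have charAdj : ∀ a b : Fin n, G.Adj a b ↔
      ((a = v ∧ b ≠ v) ∨ (b = v ∧ a ≠ v) ∨ (a = w ∧ b = x) ∨ (a = x ∧ b = w)) := by
    intro a b
    constructor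
    · intro h
      by_cases hav : a = v
      · exact Or.inl ⟨hav, fun hbv => G.ne_of_adj h (by rw [hav, hbv])⟩
      by_cases hbv : b = v
      · exact Or.inr (Or.inl ⟨hbv, hav⟩)
      by_cases haw : a = w
      · subst haw
        have : b ∈ G.neighborFinset a := (mem_neighborFinset _ _ _).mpr h
        rw [hnbrw, Finset.mem_insert, Finset.mem_singleton] at this
        rcases this with rfl | rfl
        · exact absurd rfl hbv
        · exact Or.inr (Or.inr (Or.inl ⟨rfl, rfl⟩))
      by_cases hax : a = x
      · subst hax
        have : b ∈ G.neighborFinset a := (mem_neighborFinset _ _ _).mpr h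
        rw [hnbrx, Finset.mem_insert, Finset.mem_singleton] at this
        rcases this with rfl | rfl
        · exact absurd rfl hbv
        · exact Or.inr (Or.inr (Or.inr ⟨rfl, rfl⟩))
      · exfalso
        have hd1 : G.degree a = 1 := hrest a hav haw hax
        have hvmem : v ∈ G.neighborFinset a := (mem_neighborFinset _ _ _).mpr (b1 a hav).symm
        have hsub : {v} ⊆ G.neighborFinset a := Finset.singleton_subset_iff.mpr hvmem
        have hcard : (G.neighborFinset a).card ≤ ({v} : Finset (Fin n)).card := by
          rw [card_neighborFinset_eq_degree, hd1, Finset.card_singleton]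
        have heq := Finset.eq_of_subset_of_card_le hsub hcard
        have : b ∈ G.neighborFinset a := (mem_neighborFinset _ _ _).mpr h
        rw [← heq, Finset.mem_singleton] at this
        exact hbv this
    · rintro (⟨rfl, hb⟩ | ⟨rfl, ha⟩ | ⟨rfl, rfl⟩ | ⟨rfl, rfl⟩)
      · exact b1 b hb
      · exact (b1 a ha).symm
      · exact b2
      · exact b2.symm
  -- build the permutation
  set v0 : Fin n := ⟨0, by omega⟩
  set v1 : Fin n := ⟨1, by omega⟩
  set v2 : Fin n := ⟨2, by omega⟩
  have hval0 : v0.val = 0 := rfl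
  have hval1 : v1.val = 1 := rfl
  have hval2 : v2.val = 2 := rfl
  have h01 : v0 ≠ v1 := by rw [ne_eq, Fin.ext_iff, hval0, hval1]; omega
  have h02 : v0 ≠ v2 := by rw [ne_eq, Fin.ext_iff, hval0, hval2]; omega
  have h12 : v1 ≠ v2 := by rw [ne_eq, Fin.ext_iff, hval1, hval2]; omega
  set s1 : Equiv.Perm (Fin n) := Equiv.swap v v0 with hs1
  set w1 : Fin n := s1 w with hw1
  set x1 : Fin n := s1 x with hx1
  set s2 : Equiv.Perm (Fin n) := Equiv.swap w1 v1 with hs2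
  set x2 : Fin n := s2 x1 with hx2
  set s3 : Equiv.Perm (Fin n) := Equiv.swap x2 v2 with hs3
  set π : Equiv.Perm (Fin n) := s1.trans (s2.trans s3) with hπ
  have hs1v : s1 v = v0 := Equiv.swap_apply_left v v0
  have hw1v0 : w1 ≠ v0 := by
    rw [hw1, ← hs1v]
    exact fun h => hvw.symm (s1.injective h)
  have hx1v0 : x1 ≠ v0 := by
    rw [hx1, ← hs1v]
    exact fun h => hvx.symm (s1.injective h)
  have hx1w1 : x1 ≠ w1 := by
    rw [hx1, hw1]
    exact fun h => hwx.symm (s1.injective h)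
  have hs2v0 : s2 v0 = v0 := Equiv.swap_apply_of_ne_of_ne (Ne.symm hw1v0) h01
  have hs2w1 : s2 w1 = v1 := Equiv.swap_apply_left w1 v1
  have hx2v0 : x2 ≠ v0 := by
    rw [hx2, ← hs2v0]
    exact fun h => hx1v0 (s2.injective h)
  have hx2v1 : x2 ≠ v1 := by
    rw [hx2, ← hs2w1]
    exact fun h => hx1w1 (s2.injective h)
  have hs3v0 : s3 v0 = v0 := Equiv.swap_apply_of_ne_of_ne (Ne.symm hx2v0) h02
  have hs3v1 : s3 v1 = v1 := Equiv.swap_apply_of_ne_of_ne (Ne.symm hx2v1) h12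
  have hs3x2 : s3 x2 = v2 := Equiv.swap_apply_left x2 v2
  have hπv : π v = v0 := by
    show s3 (s2 (s1 v)) = v0
    rw [hs1v, hs2v0, hs3v0]
  have hπw : π w = v1 := by
    show s3 (s2 (s1 w)) = v1
    rw [← hw1, hs2w1, hs3v1]
  have hπx : π x = v2 := by
    show s3 (s2 (s1 x)) = v2
    rw [← hx1, ← hx2, hs3x2]
  have hπa : ∀ (a : Fin n) (z : Fin n), π a = π z ↔ a = z := fun a z => π.injective.eq_iff
  refine ⟨⟨π, ?_⟩⟩
  intro a b
  rw [star_adj, charAdj]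
  have e0 : ∀ a : Fin n, (π a).val = 0 ↔ a = v := by
    intro a
    rw [show (0:ℕ) = v0.val from rfl, ← Fin.ext_iff, ← hπv, hπa a v]
  have e1 : ∀ a : Fin n, (π a).val = 1 ↔ a = w := by
    intro a
    rw [show (1:ℕ) = v1.val from rfl, ← Fin.ext_iff, ← hπw, hπa a w]
  have e2 : ∀ a : Fin n, (π a).val = 2 ↔ a = x := by
    intro a
    rw [show (2:ℕ) = v2.val from rfl, ← Fin.ext_iff, ← hπx, hπa a x]
  have hne : π a ≠ π b ↔ a ≠ b := by rw [ne_eq, ne_eq, hπa]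
  rw [hne, e0, e0, e1 a, e2 b, e1 b, e2 a]
  constructor
  · rintro ⟨hab, h | h | ⟨h1, h2⟩ | ⟨h1, h2⟩⟩
    · exact Or.inl ⟨h, fun hb => hab (h.trans hb.symm)⟩
    · exact Or.inr (Or.inl ⟨h, fun hb => hab (hb.trans h.symm)⟩)
    · exact Or.inr (Or.inr (Or.inl ⟨h1, h2⟩))
    · exact Or.inr (Or.inr (Or.inr ⟨h2, h1⟩))
  · rintro (⟨rfl, hb⟩ | ⟨rfl, hb⟩ | ⟨rfl, rfl⟩ | ⟨rfl, rfl⟩)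
    · exact ⟨fun h => hb h.symm, Or.inl rfl⟩
    · exact ⟨hb, Or.inr (Or.inl rfl)⟩
    · exact ⟨hwx, Or.inr (Or.inr (Or.inl ⟨rfl, rfl⟩))⟩
    · exact ⟨hwx.symm, Or.inr (Or.inr (Or.inr ⟨rfl, rfl⟩))⟩

end StarIso

lemma sum_of_multiset {α : ℝ} {n : ℕ} (hn : 4 ≤ n) (d : Fin n → ℕ) {v w x : Fin n}
    (hvw : v ≠ w) (hvx : v ≠ x) (hwx : w ≠ x)
    (hdv : d v = n - 1) (hdw : d w = 2) (hdx : d x = 2)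
    (hrest : ∀ u, u ≠ v → u ≠ w → u ≠ x → d u = 1) :
    ∑ u, (d u : ℝ) ^ α = ((n:ℝ) - 1) ^ α + 2 * 2 ^ α + ((n:ℝ) - 3) := by
  classical
  set T : Finset (Fin n) := {v, w, x} with hTdef
  have hTsub : T ⊆ Finset.univ := Finset.subset_univ T
  have hcardT : T.card = 3 := by
    rw [hTdef, Finset.card_insert_of_notMem (by simp [hvw, hvx]),
      Finset.card_insert_of_notMem (by simp [hwx]), Finset.card_singleton]
  have hcardR : (Finset.univ \ T).card = n - 3 := by
    rw [Finset.card_sdiff_of_subset hTsub, hcardT, Finset.card_univ, Fintype.card_fin]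
  have hTsum : ∑ u ∈ T, (d u : ℝ) ^ α = ((n:ℝ) - 1) ^ α + 2 * 2 ^ α := by
    rw [hTdef, Finset.sum_insert (by simp [hvw, hvx]),
      Finset.sum_insert (by simp [hwx]), Finset.sum_singleton, hdv, hdw, hdx]
    have : ((n - 1 : ℕ) : ℝ) = (n:ℝ) - 1 := by
      have : (1:ℕ) ≤ n := by omega
      push_cast [this]
      rfl
    rw [this]
    norm_num
    ring
  have hRsum : ∑ u ∈ Finset.univ \ T, (d u : ℝ) ^ α = (n:ℝ) - 3 := by
    have h1 : ∀ u ∈ Finset.univ \ T, (d u : ℝ) ^ α = 1 := by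
      intro u hu
      rw [Finset.mem_sdiff, hTdef, Finset.mem_insert, Finset.mem_insert,
        Finset.mem_singleton] at hu
      push_neg at hu
      obtain ⟨-, h1, h2, h3⟩ := hu
      rw [hrest u h1 h2 h3]
      simp
    rw [Finset.sum_congr rfl h1, Finset.sum_const, hcardR, nsmul_eq_mul, mul_one]
    have : (3:ℕ) ≤ n := by omega
    push_cast [this]
    ring
  rw [← Finset.sum_sdiff hTsub, hTsum, hRsum]
  ring

theorem stmt6_aux {n : ℕ} (hn : 4 ≤ n) (G : SimpleGraph (Fin n)) [DecidableRel G.Adj]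
    (hG : G.Connected ∧ G.edgeFinset.card = n) (α : ℝ) (hα : α < 0 ∨ 1 < α) :
    ((n : ℝ) * 2 ^ α ≤ ∑ u : Fin n, (G.degree u : ℝ) ^ α) ∧
    (∑ u : Fin n, (G.degree u : ℝ) ^ α ≤ ((n : ℝ) - 1) ^ α + 2 ^ (α + 1) + (n : ℝ) - 3) ∧
    ((∑ u : Fin n, (G.degree u : ℝ) ^ α = (n : ℝ) * 2 ^ α) ↔
      Nonempty (G ≃g SimpleGraph.cycleGraph n)) ∧
    ((∑ u : Fin n, (G.degree u : ℝ) ^ α = ((n : ℝ) - 1) ^ α + 2 ^ (α + 1) + (n : ℝ) - 3) ↔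
      Nonempty (G ≃g unicyclicStar n)) := by
  classical
  obtain ⟨hconn, hedge⟩ := hG
  have hd1 : ∀ u, 1 ≤ G.degree u := one_le_degree_of_connected (by omega) hconn
  have hdM : ∀ u, G.degree u ≤ n - 1 := by
    intro u
    have := G.degree_lt_card_verts u
    rw [Fintype.card_fin] at this
    omega
  have hsum : ∑ u, G.degree u = 2 * n := by
    rw [G.sum_degrees_eq_twice_card_edges, hedge]
  obtain ⟨a, b, c, hab, hac, hbc, ha2, hb2, hc2⟩ := exists_three_deg_two hconn hedge
  have lower := lower_real hα (fun u => G.degree u) hd1 hsum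
  have upper := upper_real hα hn (fun u => G.degree u) hd1 hdM hsum hab hac hbc ha2 hb2 hc2
  have h2pow : (2:ℝ) ^ (α + 1) = 2 * 2 ^ α := by
    rw [Real.rpow_add two_pos, Real.rpow_one]
    ring
  have hforms : ((n:ℝ) - 1) ^ α + 2 ^ (α + 1) + (n:ℝ) - 3
      = ((n:ℝ) - 1) ^ α + 2 * 2 ^ α + ((n:ℝ) - 3) := by
    rw [h2pow]; ring
  refine ⟨lower.1, ?_, ?_, ?_⟩
  · rw [hforms]; exact upper.1
  · constructor
    · intro heq
      exact iso_cycle_of_two_regular hn hconn hedge (lower.2 heq)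
    · rintro ⟨e⟩
      have hall : ∀ u, G.degree u = 2 := fun u => by
        rw [iso_degree e u, cycleGraph_degree_eq_two (by omega)]
      calc ∑ u, (G.degree u : ℝ) ^ α = ∑ _u : Fin n, (2:ℝ) ^ α :=
            Finset.sum_congr rfl fun u _ => by rw [hall u]; norm_num
        _ = (n:ℝ) * 2 ^ α := by
            rw [Finset.sum_const, Finset.card_univ, Fintype.card_fin, nsmul_eq_mul]
  · constructor
    · intro heq
      have heq' : ∑ u, (G.degree u : ℝ) ^ α = ((n:ℝ) - 1) ^ α + 2 * 2 ^ α + ((n:ℝ) - 3) := by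
        rw [heq, hforms]
      obtain ⟨v, w, x, hvw, hvx, hwx, hdv, hdw, hdx, hrest⟩ := upper.2 heq'
      exact iso_star hn hvw hvx hwx hdv hdw hdx hrest
    · rintro ⟨e⟩
      set v0 : Fin n := ⟨0, by omega⟩
      set v1 : Fin n := ⟨1, by omega⟩
      set v2 : Fin n := ⟨2, by omega⟩
      obtain ⟨hs0, hs1, hs2, hsrest⟩ := star_degrees (n := n) hn
      set v : Fin n := e.symm v0 with hvdef
      set w : Fin n := e.symm v1 with hwdef
      set x : Fin n := e.symm v2 with hxdef
      have hval0 : v0.val = 0 := rfl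
      have hval1 : v1.val = 1 := rfl
      have hval2 : v2.val = 2 := rfl
      have h01 : v0 ≠ v1 := by rw [ne_eq, Fin.ext_iff, hval0, hval1]; omega
      have h02 : v0 ≠ v2 := by rw [ne_eq, Fin.ext_iff, hval0, hval2]; omega
      have h12 : v1 ≠ v2 := by rw [ne_eq, Fin.ext_iff, hval1, hval2]; omega
      have hdeg : ∀ u : Fin n, G.degree u = (unicyclicStar n).degree (e u) :=
        fun u => iso_degree e u
      have hdv : G.degree v = n - 1 := by
        rw [hdeg, hvdef, RelIso.apply_symm_apply]
        exact hs0
      have hdw : G.degree w = 2 := by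
        rw [hdeg, hwdef, RelIso.apply_symm_apply]
        exact hs1
      have hdx : G.degree x = 2 := by
        rw [hdeg, hxdef, RelIso.apply_symm_apply]
        exact hs2
      have hrest : ∀ u, u ≠ v → u ≠ w → u ≠ x → G.degree u = 1 := by
        intro u h1 h2 h3
        rw [hdeg]
        refine hsrest (e u) ?_
        have e1 : e u ≠ v0 := fun h => h1 (by rw [hvdef, ← h, RelIso.symm_apply_apply])
        have e2 : e u ≠ v1 := fun h => h2 (by rw [hwdef, ← h, RelIso.symm_apply_apply])
        have e3 : e u ≠ v2 := fun h => h3 (by rw [hxdef, ← h, RelIso.symm_apply_apply])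
        rw [ne_eq, Fin.ext_iff, hval0] at e1
        rw [ne_eq, Fin.ext_iff, hval1] at e2
        rw [ne_eq, Fin.ext_iff, hval2] at e3
        omega
      have hvw : v ≠ w := fun h => h01 (e.symm.injective h)
      have hvx : v ≠ x := fun h => h02 (e.symm.injective h)
      have hwx : w ≠ x := fun h => h12 (e.symm.injective h)
      rw [hforms]
      exact sum_of_multiset hn (fun u => G.degree u) hvw hvx hwx hdv hdw hdx hrest

theorem stmt6 {n : ℕ} (hn : 4 ≤ n) (G : SimpleGraph (Fin n)) [DecidableRel G.Adj]
    (hG : IsUnicyclic G) (α : ℝ) (hα : α < 0 ∨ 1 < α) :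
    ((n : ℝ) * 2 ^ α ≤ ∑ u : Fin n, (G.degree u : ℝ) ^ α) ∧
    (∑ u : Fin n, (G.degree u : ℝ) ^ α ≤ ((n : ℝ) - 1) ^ α + 2 ^ (α + 1) + (n : ℝ) - 3) ∧
    ((∑ u : Fin n, (G.degree u : ℝ) ^ α = (n : ℝ) * 2 ^ α) ↔
      Nonempty (G ≃g SimpleGraph.cycleGraph n)) ∧
    ((∑ u : Fin n, (G.degree u : ℝ) ^ α = ((n : ℝ) - 1) ^ α + 2 ^ (α + 1) + (n : ℝ) - 3) ↔
      Nonempty (G ≃g unicyclicStar n)) := by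
  exact stmt6_aux hn G hG α hα
end
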